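/- arXiv:1505.04640 — 4 statements merged into one kernel-verified Lean document; each statement's English description precedes it below -/
import Mathlib

section
/- Let f : Eⁿ → ℝ be measurable with E[f(X)²] < ∞. For every choice of distinct indices 1 ≤ i₁ < ⋯ < i_k ≤ n (k ≥ 1), the conditional expectation of the iterated difference given the first k−1 of the involved coordinates vanishes: E[Δ_{i₁}⋯Δ_{i_k} f(X',X) | X_{i₁},…,X_{i_{k−1}}] = 0 almost surely. -/
open Finset MeasureTheory ProbabilityTheory

/-- The iterated difference operator `Δ_{i₁}⋯Δ_{i_k} f(y,y')`, defined recursively. -/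
def deltaIter {E : Type*} {n : ℕ} (f : (Fin n → E) → ℝ) :
    List (Fin n) → (Fin n → E) → (Fin n → E) → ℝ
  | [], y, _ => f y
  | i :: l, y, y' => deltaIter f l y y' - deltaIter f l (Function.update y i (y' i)) y'

lemma deltaIter_congr_right {E : Type*} {n : ℕ} (f : (Fin n → E) → ℝ) (l : List (Fin n))
    (j : Fin n) (hj : j ∉ l) (y y' : Fin n → E) (a : E) :
    deltaIter f l y (Function.update y' j a) = deltaIter f l y y' := by
  induction l generalizing y with
  | nil => rfl
  | cons i t ih =>
    have hij : i ≠ j := by rintro rfl; simp at hj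
    have hjt : j ∉ t := fun h => hj (List.mem_cons_of_mem _ h)
    simp only [deltaIter, Function.update_apply, hij, if_false,
      ih hjt]

lemma deltaIter_append {E : Type*} {n : ℕ} (f : (Fin n → E) → ℝ) (l : List (Fin n))
    (j : Fin n) (hj : j ∉ l) (y y' : Fin n → E) :
    deltaIter f (l ++ [j]) y y' =
      deltaIter f l y y' - deltaIter f l (Function.update y j (y' j)) y' := by
  induction l generalizing y with
  | nil => rfl
  | cons i t ih =>
    have hij : i ≠ j := by rintro rfl; simp at hj
    have hjt : j ∉ t := fun h => hj (List.mem_cons_of_mem _ h)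
    rw [List.cons_append]
    show deltaIter f (t ++ [j]) y y' - deltaIter f (t ++ [j]) (Function.update y i (y' i)) y' = _
    rw [ih hjt, ih hjt, Function.update_comm hij]
    show _ = deltaIter f t y y' - deltaIter f t (Function.update y i (y' i)) y' -
      (deltaIter f t (Function.update y j (y' j)) y' -
        deltaIter f t (Function.update (Function.update y j (y' j)) i (y' i)) y')
    ring

lemma deltaIter_antisymm {E : Type*} {n : ℕ} (f : (Fin n → E) → ℝ) (l : List (Fin n))
    (j : Fin n) (hj : j ∉ l) (y y' : Fin n → E) :
    deltaIter f (l ++ [j]) (Function.update y j (y' j)) (Function.update y' j (y j)) =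
      - deltaIter f (l ++ [j]) y y' := by
  rw [deltaIter_append f l j hj, deltaIter_append f l j hj]
  have h1 : Function.update (Function.update y j (y' j)) j (Function.update y' j (y j) j) = y := by
    simp [Function.update_idem]
  rw [h1, deltaIter_congr_right f l j hj, deltaIter_congr_right f l j hj]
  ring

lemma measurable_deltaIter {E : Type*} [MeasurableSpace E] {n : ℕ} (f : (Fin n → E) → ℝ)
    (hf : Measurable f) (l : List (Fin n)) :
    Measurable (fun p : (Fin n → E) × (Fin n → E) => deltaIter f l p.1 p.2) := by
  induction l with
  | nil => exact hf.comp measurable_fst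
  | cons i t ih =>
    simp only [deltaIter]
    have hpair : Measurable (fun p : (Fin n → E) × (Fin n → E) =>
        ((Function.update p.1 i (p.2 i), p.2) : (Fin n → E) × (Fin n → E))) := by
      refine Measurable.prod ?_ measurable_snd
      refine measurable_pi_lambda _ fun a => ?_
      by_cases h : a = i
      · subst h; simpa [Function.comp_def] using (measurable_pi_apply a).comp measurable_snd
      · simpa [Function.update_apply, h, Function.comp_def] using (measurable_pi_apply a).comp measurable_fst
    exact Measurable.sub ih (ih.comp hpair)

lemma map_pi_of_iIndepFun {Ω : Type*} [MeasurableSpace Ω] {E : Type*} [MeasurableSpace E]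
    {P : Measure Ω} [IsProbabilityMeasure P] {κ : Type*}
    {g : κ → Ω → E} (hg : ∀ k, Measurable (g k))
    (hindep : iIndepFun g P)
    {ι : Type*} [Fintype ι] (sel : ι → κ) (hsel : Function.Injective sel) :
    P.map (fun ω i => g (sel i) ω) = Measure.pi (fun i => P.map (g (sel i))) := by
  classical
  have hm : ∀ i, IsProbabilityMeasure (P.map (g (sel i))) :=
    fun i => Measure.isProbabilityMeasure_map (hg _).aemeasurable
  have hjoint : Measurable (fun ω (i : ι) => g (sel i) ω) :=
    measurable_pi_lambda _ fun i => hg _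
  refine (Measure.pi_eq fun s hs => ?_).symm
  rw [Measure.map_apply hjoint (MeasurableSet.univ_pi hs)]
  have hpre : (fun ω (i : ι) => g (sel i) ω) ⁻¹' (Set.univ.pi s) = ⋂ i, g (sel i) ⁻¹' s i := by
    ext ω; simp [Set.mem_pi]
  rw [hpre]
  set sets : κ → Set E := fun k => if h : ∃ i, sel i = k then s h.choose else Set.univ with hsets
  have hsets_sel : ∀ i, sets (sel i) = s i := by
    intro i
    have h : ∃ i', sel i' = sel i := ⟨i, rfl⟩
    simp only [hsets, dif_pos h]
    rw [hsel h.choose_spec]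
  have hmeas : ∀ k, MeasurableSet (sets k) := by
    intro k
    simp only [hsets]
    split
    · exact hs _
    · exact MeasurableSet.univ
  have key := hindep.measure_inter_preimage_eq_mul
    (Finset.univ.map ⟨sel, hsel⟩) (sets := sets) (fun k _ => hmeas k)
  have hiInter : (⋂ k ∈ Finset.univ.map ⟨sel, hsel⟩, g k ⁻¹' sets k)
      = ⋂ i, g (sel i) ⁻¹' s i := by
    ext ω
    simp only [Set.mem_iInter, Finset.mem_map, Finset.mem_univ, true_and,
      Function.Embedding.coeFn_mk, Set.mem_preimage]
    constructor
    · intro h i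
      have := h (sel i) ⟨i, rfl⟩
      rwa [hsets_sel] at this
    · rintro h k ⟨i, rfl⟩
      rw [hsets_sel]; exact h i
  rw [hiInter] at key
  rw [key, Finset.prod_map]
  refine Finset.prod_congr rfl fun i _ => ?_
  rw [Measure.map_apply (hg _) (hs i), Function.Embedding.coeFn_mk, hsets_sel]

/-- for distinct indices `i₁ < ⋯ < i_k` (i.e. a nonempty `B ⊆ [n]` with
largest element `i_k`), the conditional expectation of the iterated difference
`Δ_{i₁}⋯Δ_{i_k} f(X',X)` given `X_{i₁},…,X_{i_{k-1}}` (the coordinates of `X` indexed by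
`B` minus its largest element) vanishes almost surely. -/
theorem condexp_deltaIter_eq_zero
    {E : Type*} [MeasurableSpace E] {Ω : Type*} [MeasurableSpace Ω]
    (P : Measure Ω) [IsProbabilityMeasure P] {n : ℕ}
    (X X' : Ω → Fin n → E)
    (hXmeas : ∀ i, Measurable fun ω => X ω i)
    (hX'meas : ∀ i, Measurable fun ω => X' ω i)
    (hindep : iIndepFun
      (Sum.elim (fun i ω => X ω i) (fun i ω => X' ω i)) P)
    (hident : ∀ i, Measure.map (fun ω => X' ω i) P = Measure.map (fun ω => X ω i) P)
    (f : (Fin n → E) → ℝ) (hf : Measurable f)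
    (hL2 : MemLp (fun ω => f (X ω)) 2 P)
    (B : Finset (Fin n)) (hB : B.Nonempty) :
    P[(fun ω' => deltaIter f (B.sort (· ≤ ·)) (X' ω') (X ω'))
        | MeasurableSpace.comap
            (fun ω => (fun j : {j // j ∈ B.erase (B.max' hB)} => X ω j))
            MeasurableSpace.pi] =ᵐ[P] 0 := by
  classical
  set j : Fin n := B.max' hB with hjdef
  set B' : Finset (Fin n) := B.erase j with hB'def
  set l : List (Fin n) := B'.sort (· ≤ ·) with hldef
  have hjB : j ∈ B := B.max'_mem hB
  have hjl : j ∉ l := by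
    intro h
    exact (Finset.mem_erase.mp ((Finset.mem_sort _).mp h)).1 rfl
  -- the sorted list of B is l ++ [j]
  have hsort : B.sort (· ≤ ·) = l ++ [j] := by
    refine (fun hp hs => List.Perm.eq_of_pairwise' (Finset.pairwise_sort _ _) hs hp)
      (Multiset.coe_eq_coe.mp ?_) ?_
    · show ((B.sort (· ≤ ·) : List (Fin n)) : Multiset (Fin n)) = ((l ++ [j] : List (Fin n)) : Multiset (Fin n))
      rw [Finset.sort_eq]
      have : ((l ++ [j] : List (Fin n)) : Multiset (Fin n)) = (l : Multiset (Fin n)) + ([j] : List (Fin n)) := rfl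
      rw [this, hldef, Finset.sort_eq, hB'def, Finset.erase_val]
      rw [add_comm]
      have h2 : (([j] : List (Fin n)) : Multiset (Fin n)) = ({j} : Multiset (Fin n)) := rfl
      rw [h2, Multiset.singleton_add]
      exact (Multiset.cons_erase hjB).symm
    · rw [List.pairwise_append]
      refine ⟨Finset.pairwise_sort _ _, List.pairwise_singleton _ _, ?_⟩
      intro x hx y hy
      rw [List.mem_singleton] at hy
      subst hy
      exact Finset.le_max' _ _ (Finset.mem_of_mem_erase ((Finset.mem_sort _).mp hx))
  -- the family g
  set g : Fin n ⊕ Fin n → Ω → E := Sum.elim (fun i ω => X ω i) (fun i ω => X' ω i) with hgdef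
  have hgmeas : ∀ k, Measurable (g k) := by
    rintro (i | i)
    · exact hXmeas i
    · exact hX'meas i
  set ν : Fin n → Measure E := fun i => P.map (fun ω => X ω i) with hνdef
  have hlaw : ∀ sel : Fin n → Fin n ⊕ Fin n, (∀ i, sel i = .inl i ∨ sel i = .inr i) →
      P.map (fun ω i => g (sel i) ω) = Measure.pi ν := by
    intro sel hsel2
    have hsel : Function.Injective sel := by
      intro a b hab
      rcases hsel2 a with h1 | h1 <;> rcases hsel2 b with h2 | h2 <;>
        rw [h1, h2] at hab <;> simpa using hab
    rw [map_pi_of_iIndepFun hgmeas hindep sel hsel]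
    refine congrArg Measure.pi (funext fun i => ?_)
    rcases hsel2 i with h | h <;> rw [h]
    · rfl
    · exact hident i
  have hXjm : Measurable (fun ω => X ω) := measurable_pi_lambda _ hXmeas
  have hXlaw : P.map (fun ω => X ω) = Measure.pi ν :=
    hlaw (fun i => .inl i) (fun i => Or.inl rfl)
  -- integrability of f over mixed vectors
  have hfX : MemLp f 2 (Measure.pi ν) := by
    rw [← hXlaw]
    exact (memLp_map_measure_iff hf.aestronglyMeasurable hXjm.aemeasurable).mpr hL2
  have hmixmeas : ∀ s : Finset (Fin n),
      Measurable (fun ω (i : Fin n) => if i ∈ s then X ω i else X' ω i) := by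
    intro s
    refine measurable_pi_lambda _ fun i => ?_
    by_cases h : i ∈ s <;> simp only [h, if_true, if_false]
    · exact hXmeas i
    · exact hX'meas i
  have hmixlaw : ∀ s : Finset (Fin n),
      P.map (fun ω (i : Fin n) => if i ∈ s then X ω i else X' ω i) = Measure.pi ν := by
    intro s
    have heq : (fun ω (i : Fin n) => g (if i ∈ s then .inl i else .inr i) ω)
        = (fun ω (i : Fin n) => if i ∈ s then X ω i else X' ω i) := by
      funext ω i
      by_cases h : i ∈ s <;> simp [h, hgdef]
    rw [← heq]
    exact hlaw _ (fun i => by by_cases h : i ∈ s <;> simp [h])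
  have hint : ∀ s : Finset (Fin n),
      Integrable (fun ω => f (fun i => if i ∈ s then X ω i else X' ω i)) P := by
    intro s
    have h2 : MemLp (f ∘ (fun ω (i : Fin n) => if i ∈ s then X ω i else X' ω i)) 2 P := by
      rw [← memLp_map_measure_iff hf.aestronglyMeasurable (hmixmeas s).aemeasurable, hmixlaw s]
      exact hfX
    exact h2.integrable one_le_two
  have hdint : ∀ (L : List (Fin n)) (s : Finset (Fin n)),
      Integrable (fun ω => deltaIter f L (fun i => if i ∈ s then X ω i else X' ω i) (X ω)) P := by
    intro L
    induction L with
    | nil => intro s; exact hint s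
    | cons i t ih =>
      intro s
      simp only [deltaIter]
      refine (ih s).sub ?_
      have heq : (fun ω => deltaIter f t
          (Function.update (fun i' => if i' ∈ s then X ω i' else X' ω i') i (X ω i)) (X ω))
          = fun ω => deltaIter f t (fun i' => if i' ∈ insert i s then X ω i' else X' ω i') (X ω) := by
        funext ω
        congr 1
        funext i'
        by_cases h : i' = i
        · subst h; simp
        · simp [Function.update_apply, h, Finset.mem_insert]
      rw [heq]
      exact ih (insert i s)
  have hInt : Integrable (fun ω => deltaIter f (B.sort (· ≤ ·)) (X' ω) (X ω)) P := by
    have := hdint (B.sort (· ≤ ·)) ∅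
    simpa using this
  -- conditional expectation setup
  have hVmeas : Measurable (fun ω => (fun j' : {j' // j' ∈ B'} => X ω j')) :=
    measurable_pi_lambda _ fun j' => hXmeas j'
  have hm : MeasurableSpace.comap (fun ω => (fun j' : {j' // j' ∈ B'} => X ω j'))
      MeasurableSpace.pi ≤ (inferInstance : MeasurableSpace Ω) := hVmeas.comap_le
  haveI : SigmaFinite (P.trim hm) := by
    haveI := isFiniteMeasure_trim hm (μ := P)
    infer_instance
  -- the joint variable and the swap
  set Z : Ω → ((Fin n ⊕ Fin n) → E) := fun ω k => g k ω with hZdef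
  have hZmeas : Measurable Z := measurable_pi_lambda _ hgmeas
  set e : Fin n ⊕ Fin n → Fin n ⊕ Fin n :=
    fun k => if k = .inl j then .inr j else if k = .inr j then .inl j else k with hedef
  have he_invol : ∀ k, e (e k) = k := by
    intro k
    by_cases h1 : k = .inl j
    · subst h1; simp [hedef]
    · by_cases h2 : k = .inr j
      · subst h2; simp [hedef]
      · simp [hedef, h1, h2]
  have he_inj : Function.Injective e := Function.Involutive.injective he_invol
  have hZlaw : P.map Z = Measure.pi (fun k => P.map (g k)) :=
    map_pi_of_iIndepFun hgmeas hindep id Function.injective_id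
  have hZ'law : P.map (fun ω k => g (e k) ω) = P.map Z := by
    rw [hZlaw, map_pi_of_iIndepFun hgmeas hindep e he_inj]
    refine congrArg Measure.pi (funext fun k => ?_)
    by_cases h1 : k = Sum.inl j
    · subst h1
      have he1 : e (Sum.inl j) = Sum.inr j := by simp [hedef]
      rw [he1]
      exact hident j
    · by_cases h2 : k = Sum.inr j
      · subst h2
        have he2 : e (Sum.inr j) = Sum.inl j := by simp [hedef, h1]
        rw [he2]
        exact (hident j).symm
      · have he3 : e k = k := by simp [hedef, h1, h2]
        rw [he3]
  -- functions on the product space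
  set D : ((Fin n ⊕ Fin n) → E) → ℝ :=
    fun z => deltaIter f (B.sort (· ≤ ·)) (fun i => z (.inr i)) (fun i => z (.inl i)) with hDdef
  have hDmeas : Measurable D := by
    have hpair : Measurable (fun z : (Fin n ⊕ Fin n) → E =>
        ((fun i => z (.inr i), fun i => z (.inl i)) : (Fin n → E) × (Fin n → E))) := by
      refine Measurable.prod ?_ ?_ <;>
        exact measurable_pi_lambda _ fun i => measurable_pi_apply _
    exact (measurable_deltaIter f hf _).comp hpair
  set W : ((Fin n ⊕ Fin n) → E) → ({j' // j' ∈ B'} → E) :=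
    fun z => fun j' => z (.inl j') with hWdef
  have hWmeas : Measurable W := measurable_pi_lambda _ fun j' => measurable_pi_apply _
  -- swap identities
  have hWe : ∀ z, W (fun k => z (e k)) = W z := by
    intro z
    funext j'
    have hne : (j' : Fin n) ≠ j := (Finset.mem_erase.mp j'.2).1
    have h1 : (Sum.inl (j' : Fin n) : Fin n ⊕ Fin n) ≠ .inl j := by simpa using hne
    have h2 : (Sum.inl (j' : Fin n) : Fin n ⊕ Fin n) ≠ .inr j := by simp
    simp [hWdef, hedef, h1, h2]
  have hDe : ∀ z, D (fun k => z (e k)) = - D z := by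
    intro z
    have hy : (fun i => (fun k => z (e k)) (.inr i))
        = Function.update (fun i => z (.inr i)) j ((fun i => z (.inl i)) j) := by
      funext i
      by_cases h : i = j
      · subst h; simp [hedef]
      · have h1 : (Sum.inr i : Fin n ⊕ Fin n) ≠ .inl j := by simp
        have h2 : (Sum.inr i : Fin n ⊕ Fin n) ≠ .inr j := by simpa using h
        simp [hedef, h1, h2, Function.update_apply, h]
    have hy' : (fun i => (fun k => z (e k)) (.inl i))
        = Function.update (fun i => z (.inl i)) j ((fun i => z (.inr i)) j) := by
      funext i
      by_cases h : i = j
      · subst h; simp [hedef]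
      · have h1 : (Sum.inl i : Fin n ⊕ Fin n) ≠ .inl j := by simpa using h
        have h2 : (Sum.inl i : Fin n ⊕ Fin n) ≠ .inr j := by simp
        simp [hedef, h1, h2, Function.update_apply, h]
    simp only [hDdef]
    rw [hy, hy', hsort]
    exact deltaIter_antisymm f l j hjl (fun i => z (Sum.inr i)) (fun i => z (Sum.inl i))
  -- conclusion via set-integral characterization
  refine (ae_eq_condExp_of_forall_setIntegral_eq hm hInt
    (fun s _ _ => (integrable_zero _ _ _).integrableOn)
    (fun s hs _ => ?_)
    (StronglyMeasurable.aestronglyMeasurable stronglyMeasurable_zero)).symm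
  obtain ⟨S, hS, rfl⟩ := hs
  have hVS : MeasurableSet ((fun ω => (fun j' : {j' // j' ∈ B'} => X ω j')) ⁻¹' S) :=
    hVmeas hS
  set Φ : ((Fin n ⊕ Fin n) → E) → ℝ := fun z => (W ⁻¹' S).indicator D z with hΦdef
  have hΦmeas : Measurable Φ := hDmeas.indicator (hWmeas hS)
  have hΦZ : ∀ ω, Φ (Z ω) =
      ((fun ω => (fun j' : {j' // j' ∈ B'} => X ω j')) ⁻¹' S).indicator
        (fun ω => deltaIter f (B.sort (· ≤ ·)) (X' ω) (X ω)) ω := by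
    intro ω
    by_cases h : ω ∈ (fun ω => (fun j' : {j' // j' ∈ B'} => X ω j')) ⁻¹' S
    · have hz : Z ω ∈ W ⁻¹' S := h
      rw [Set.indicator_of_mem h]
      simp only [hΦdef]
      rw [Set.indicator_of_mem hz]
      rfl
    · have hz : Z ω ∉ W ⁻¹' S := h
      rw [Set.indicator_of_notMem h]
      simp only [hΦdef]
      rw [Set.indicator_of_notMem hz]
  have hΦe : ∀ z, Φ (fun k => z (e k)) = - Φ z := by
    intro z
    by_cases h : z ∈ W ⁻¹' S
    · have h' : (fun k => z (e k)) ∈ W ⁻¹' S := by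
        simp only [Set.mem_preimage] at h ⊢
        rw [hWe z]; exact h
      rw [hΦdef]
      simp only [Set.indicator_of_mem h', Set.indicator_of_mem h]
      exact hDe z
    · have h' : (fun k => z (e k)) ∉ W ⁻¹' S := by
        simp only [Set.mem_preimage] at h ⊢
        rw [hWe z]; exact h
      rw [hΦdef]
      simp only [Set.indicator_of_notMem h', Set.indicator_of_notMem h]
      ring
  -- the integral is zero
  have hI : ∫ ω, Φ (Z ω) ∂P = - ∫ ω, Φ (Z ω) ∂P := by
    calc ∫ ω, Φ (Z ω) ∂P
        = ∫ z, Φ z ∂(P.map Z) := (integral_map hZmeas.aemeasurable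
          hΦmeas.aestronglyMeasurable).symm
      _ = ∫ z, Φ z ∂(P.map (fun ω k => g (e k) ω)) := by rw [hZ'law]
      _ = ∫ ω, Φ (fun k => g (e k) ω) ∂P := integral_map
          (measurable_pi_lambda _ fun k => hgmeas (e k)).aemeasurable
          hΦmeas.aestronglyMeasurable
      _ = ∫ ω, - Φ (Z ω) ∂P := by
          refine integral_congr_ae (Filter.Eventually.of_forall fun ω => ?_)
          exact hΦe (Z ω)
      _ = - ∫ ω, Φ (Z ω) ∂P := integral_neg _
  have hIzero : ∫ ω, Φ (Z ω) ∂P = 0 := by linarith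
  simp only [Pi.zero_apply, integral_zero]
  rw [← integral_indicator hVS]
  rw [← integral_congr_ae (Filter.Eventually.of_forall hΦZ)]
  exact hIzero.symm
end

section
/- For all measurable f, g : Eⁿ → ℝ with E[f(X)²] < ∞ and E[g(X)²] < ∞, one has Cov(f(X), g(X)) = (1/2) Σ_{A ⊊ [n]} κ_{n,A} Σ_{j ∉ A} E[ Δ_j g(X,X') · Δ_j f(X^A, X') ], where κ_{n,A} := 1/( C(n,|A|) · (n−|A|) ). -/
open Finset MeasureTheory ProbabilityTheory
open scoped symmDiff ENNReal

/-- `X^A`: the vector whose `i`-th coordinate is `X'ᵢ` if `i ∈ A` and `Xᵢ` otherwise. -/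
def substRV {Ω E : Type*} {n : ℕ} (X X' : Ω → Fin n → E) (A : Finset (Fin n)) :
    Ω → Fin n → E :=
  fun ω i => if i ∈ A then X' ω i else X ω i

/-- `κ_{n,A} = 1/(C(n,|A|)(n-|A|))`. -/
noncomputable def kappa (n : ℕ) (A : Finset (Fin n)) : ℝ :=
  ((n.choose A.card : ℝ) * ((n : ℝ) - A.card))⁻¹

lemma telescope_sum (n : ℕ) (F : Finset (Fin n) → ℝ) :
    ∑ A ∈ (Finset.univ : Finset (Fin n)).powerset.filter (fun A => A ≠ Finset.univ),
      kappa n A * ∑ j ∈ Aᶜ, (F A - F (insert j A)) = F ∅ - F Finset.univ := by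
  classical
  set c : ℕ → ℝ := fun k => ((n.choose k : ℝ))⁻¹ with hc
  have hS : (Finset.univ : Finset (Fin n)).powerset.filter (fun A => A ≠ Finset.univ)
      = (Finset.univ : Finset (Finset (Fin n))).erase Finset.univ := by
    rw [Finset.powerset_univ, Finset.filter_ne']
  have hS' : (Finset.univ : Finset (Finset (Fin n))).filter (fun B => B ≠ ∅)
      = (Finset.univ : Finset (Finset (Fin n))).erase ∅ := Finset.filter_ne' _ _
  -- cardinality facts
  have hcardlt : ∀ A : Finset (Fin n), A ≠ Finset.univ → A.card < n := by
    intro A hA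
    have := Finset.card_lt_card (lt_of_le_of_ne (Finset.subset_univ A) hA)
    simpa using this
  -- step 1 : rewrite each summand
  have step1 : ∀ A : Finset (Fin n), A ≠ Finset.univ →
      kappa n A * ∑ j ∈ Aᶜ, (F A - F (insert j A))
        = c A.card * F A - ∑ j ∈ Aᶜ, kappa n A * F (insert j A) := by
    intro A hA
    rw [Finset.sum_sub_distrib, mul_sub]
    congr 1
    · have hcc : (Aᶜ : Finset (Fin n)).card = n - A.card := by
        simp [Finset.card_compl]
      rw [Finset.sum_const, hcc, nsmul_eq_mul]
      have hlt := hcardlt A hA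
      have h1 : ((n - A.card : ℕ) : ℝ) = (n : ℝ) - A.card := by
        rw [Nat.cast_sub hlt.le]
      have hch : (n.choose A.card : ℝ) ≠ 0 := by
        exact_mod_cast (Nat.choose_pos hlt.le).ne'
      have hd : (n : ℝ) - A.card ≠ 0 := by
        have : (A.card : ℝ) < n := by exact_mod_cast hlt
        linarith
      rw [kappa, h1]
      simp only [hc]
      field_simp
    · exact Finset.mul_sum _ _ _
  rw [Finset.sum_congr rfl (fun A hA => step1 A (by
    simpa using (Finset.mem_filter.mp hA).2)), Finset.sum_sub_distrib]
  -- step 2 : reindex the double sum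
  have step2 : ∑ A ∈ (Finset.univ : Finset (Fin n)).powerset.filter (fun A => A ≠ Finset.univ),
      ∑ j ∈ Aᶜ, kappa n A * F (insert j A)
      = ∑ B ∈ (Finset.univ : Finset (Finset (Fin n))).filter (fun B => B ≠ ∅),
        ∑ j ∈ B, kappa n (B.erase j) * F B := by
    rw [Finset.sum_sigma', Finset.sum_sigma']
    refine Finset.sum_nbij' (fun p => ⟨insert p.2 p.1, p.2⟩) (fun q => ⟨q.1.erase q.2, q.2⟩)
      ?_ ?_ ?_ ?_ ?_
    · rintro ⟨A, j⟩ hp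
      simp only [Finset.mem_sigma, Finset.mem_filter, Finset.mem_compl] at hp ⊢
      exact ⟨⟨Finset.mem_univ _, Finset.insert_ne_empty _ _⟩, Finset.mem_insert_self _ _⟩
    · rintro ⟨B, j⟩ hq
      simp only [Finset.mem_sigma, Finset.mem_filter, Finset.mem_powerset,
        Finset.mem_compl] at hq ⊢
      refine ⟨⟨Finset.subset_univ _, ?_⟩, Finset.notMem_erase _ _⟩
      intro h
      have : j ∈ B.erase j := h ▸ Finset.mem_univ j
      exact Finset.notMem_erase j B this
    · rintro ⟨A, j⟩ hp
      simp only [Finset.mem_sigma, Finset.mem_filter, Finset.mem_compl] at hp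
      simp [Finset.erase_insert hp.2]
    · rintro ⟨B, j⟩ hq
      simp only [Finset.mem_sigma, Finset.mem_filter] at hq
      simp [Finset.insert_erase hq.2]
    · rintro ⟨A, j⟩ hp
      simp only [Finset.mem_sigma, Finset.mem_filter, Finset.mem_compl] at hp
      simp [Finset.erase_insert hp.2]
  rw [step2]
  -- step 3 : inner sum over j ∈ B is c |B| * F B
  have step3 : ∀ B : Finset (Fin n), B ≠ ∅ →
      ∑ j ∈ B, kappa n (B.erase j) * F B = c B.card * F B := by
    intro B hB
    have hBle : B.card ≤ n := by simpa using Finset.card_le_card (Finset.subset_univ B)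
    have hBpos : 0 < B.card := Finset.card_pos.mpr (Finset.nonempty_of_ne_empty hB)
    have hconst : ∀ j ∈ B, kappa n (B.erase j) * F B
        = ((n.choose (B.card - 1) : ℝ) * ((n : ℝ) - (B.card - 1 : ℕ)))⁻¹ * F B := by
      intro j hj
      rw [kappa, Finset.card_erase_of_mem hj]
    -- arithmetic
    set b := B.card with hb
    have key : (n.choose b : ℝ) * b = (n.choose (b - 1) : ℝ) * ((n : ℝ) - (b - 1 : ℕ)) := by
      have hb1 : b - 1 + 1 = b := by omega
      have h := Nat.choose_succ_right_eq n (b - 1)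
      rw [hb1] at h
      have h3 : ((n - (b - 1) : ℕ) : ℝ) = (n : ℝ) - ((b - 1 : ℕ) : ℝ) := by
        have hle : b - 1 ≤ n := by omega
        exact Nat.cast_sub hle
      rw [← h3]
      exact_mod_cast congrArg (Nat.cast : ℕ → ℝ) h
    have hchb : (n.choose b : ℝ) ≠ 0 := by exact_mod_cast (Nat.choose_pos hBle).ne'
    have hbne : (b : ℝ) ≠ 0 := by exact_mod_cast hBpos.ne'
    have harith : (b : ℝ) * ((n.choose (b - 1) : ℝ) * ((n : ℝ) - (b - 1 : ℕ)))⁻¹ = c b := by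
      rw [← key]
      simp only [hc]
      field_simp
    rw [Finset.sum_congr rfl hconst, Finset.sum_const, nsmul_eq_mul, ← mul_assoc, harith]
  rw [Finset.sum_congr rfl (fun B hB => step3 B (Finset.mem_filter.mp hB).2)]
  -- step 4 : the two single sums
  rw [hS, hS']
  rw [Finset.sum_erase_eq_sub (Finset.mem_univ _), Finset.sum_erase_eq_sub (Finset.mem_univ _)]
  have h1 : c (Finset.univ : Finset (Fin n)).card * F Finset.univ = F Finset.univ := by
    simp [hc, Finset.card_univ]
  have h2 : c (∅ : Finset (Fin n)).card * F ∅ = F ∅ := by simp [hc]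
  rw [h1, h2]
  ring
open scoped symmDiff

section auxsel
variable {E : Type*} [MeasurableSpace E] {n : ℕ}

/-- select from a `2n`-tuple: coordinate `i` comes from the `inr` block iff `i ∈ A`. -/
def sel (A : Finset (Fin n)) (y : (Fin n ⊕ Fin n) → E) : Fin n → E :=
  fun i => if i ∈ A then y (Sum.inr i) else y (Sum.inl i)

lemma measurable_sel (A : Finset (Fin n)) : Measurable (sel (E := E) A) := by
  apply measurable_pi_lambda
  intro i
  by_cases h : i ∈ A <;> simp only [sel, h, if_true, if_false] <;> exact measurable_pi_apply _

/-- the permutation of `Fin n ⊕ Fin n` swapping `inl i ↔ inr i` for `i ∈ A`. -/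
def swapF (A : Finset (Fin n)) : (Fin n ⊕ Fin n) ≃ (Fin n ⊕ Fin n) where
  toFun := Sum.elim (fun i => if i ∈ A then .inr i else .inl i)
    (fun i => if i ∈ A then .inl i else .inr i)
  invFun := Sum.elim (fun i => if i ∈ A then .inr i else .inl i)
    (fun i => if i ∈ A then .inl i else .inr i)
  left_inv := by rintro (i | i) <;> by_cases h : i ∈ A <;> simp [h]
  right_inv := by rintro (i | i) <;> by_cases h : i ∈ A <;> simp [h]

lemma sel_swapF (A B : Finset (Fin n)) (y : (Fin n ⊕ Fin n) → E) :
    sel B (y ∘ swapF A) = sel (A ∆ B) y := by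
  funext i
  by_cases h1 : i ∈ A <;> by_cases h2 : i ∈ B <;>
    simp [sel, swapF, Finset.mem_symmDiff, h1, h2]

lemma update_sel (A : Finset (Fin n)) (j : Fin n) (y : (Fin n ⊕ Fin n) → E) :
    Function.update (sel A y) j (y (Sum.inr j)) = sel (insert j A) y := by
  funext i
  rcases eq_or_ne i j with rfl | h
  · simp [sel]
  · simp [Function.update_of_ne h, sel, Finset.mem_insert, h]

lemma symmDiff_singleton_empty (j : Fin n) : ({j} : Finset (Fin n)) ∆ ∅ = {j} := by
  simp
lemma symmDiff_univ_empty : (Finset.univ : Finset (Fin n)) ∆ ∅ = Finset.univ := by simp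
lemma symmDiff_singleton_insert {j : Fin n} {A : Finset (Fin n)} (hj : j ∉ A) :
    ({j} : Finset (Fin n)) ∆ (insert j A) = A := by
  ext i
  rcases eq_or_ne i j with rfl | h
  · simp [Finset.mem_symmDiff, hj]
  · simp [Finset.mem_symmDiff, Finset.mem_insert, h]
lemma symmDiff_singleton_set {j : Fin n} {A : Finset (Fin n)} (hj : j ∉ A) :
    ({j} : Finset (Fin n)) ∆ A = insert j A := by
  ext i
  rcases eq_or_ne i j with rfl | h
  · simp [Finset.mem_symmDiff, hj]
  · simp [Finset.mem_symmDiff, Finset.mem_insert, h]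
lemma symmDiff_set_empty (B : Finset (Fin n)) : B ∆ (∅ : Finset (Fin n)) = B := by simp

end auxsel

/-- Chatterjee's covariance identity:
`Cov(f(X), g(X)) = (1/2) ∑_{A ⊊ [n]} κ_{n,A} ∑_{j ∉ A} E[Δⱼg(X,X') Δⱼf(X^A,X')]`. -/
theorem covariance_identity
    {E : Type*} [MeasurableSpace E] {Ω : Type*} [MeasurableSpace Ω]
    (P : Measure Ω) [IsProbabilityMeasure P] {n : ℕ}
    (X X' : Ω → Fin n → E)
    (hXmeas : ∀ i, Measurable fun ω => X ω i)
    (hX'meas : ∀ i, Measurable fun ω => X' ω i)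
    (hindep : iIndepFun
      (Sum.elim (fun i ω => X ω i) (fun i ω => X' ω i)) P)
    (hident : ∀ i, Measure.map (fun ω => X' ω i) P = Measure.map (fun ω => X ω i) P)
    (f g : (Fin n → E) → ℝ) (hf : Measurable f) (hg : Measurable g)
    (hfL2 : MemLp (fun ω => f (X ω)) 2 P) (hgL2 : MemLp (fun ω => g (X ω)) 2 P) :
    (∫ ω, f (X ω) * g (X ω) ∂P) - (∫ ω, f (X ω) ∂P) * (∫ ω, g (X ω) ∂P) =
      (1 / 2) * ∑ A ∈ (Finset.univ : Finset (Fin n)).powerset.filter (fun A => A ≠ Finset.univ),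
        kappa n A * ∑ j ∈ Aᶜ,
          ∫ ω, (g (X ω) - g (Function.update (X ω) j (X' ω j))) *
            (f (substRV X X' A ω) - f (Function.update (substRV X X' A ω) j (X' ω j))) ∂P := by
  classical
  have hX : Measurable X := measurable_pi_lambda _ hXmeas
  set T : Ω → (Fin n ⊕ Fin n) → E := fun ω => Sum.elim (X ω) (X' ω) with hT_def
  have hT : Measurable T := by
    apply measurable_pi_lambda
    rintro (i | i)
    · exact hXmeas i
    · exact hX'meas i
  set m : (Fin n ⊕ Fin n) → Measure E :=
    Sum.elim (fun i => P.map (fun ω => X ω i)) (fun i => P.map (fun ω => X ω i)) with hm_def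
  haveI hmprob : ∀ k, IsProbabilityMeasure (m k) := by
    rintro (i | i) <;> exact Measure.isProbabilityMeasure_map (hXmeas _).aemeasurable
  -- the joint law of the `2n`-tuple is the product measure
  have hmap : P.map T = Measure.pi m := by
    symm
    refine Measure.pi_eq fun s hs => ?_
    rw [Measure.map_apply hT (MeasurableSet.univ_pi hs)]
    have hpre : T ⁻¹' Set.univ.pi s
        = ⋂ k ∈ (Finset.univ : Finset (Fin n ⊕ Fin n)),
            (Sum.elim (fun i ω => X ω i) (fun i ω => X' ω i) k) ⁻¹' s k := by
      ext ω
      simp only [Set.mem_preimage, Set.mem_pi, Set.mem_univ, true_implies, Set.mem_iInter,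
        Finset.mem_univ]
      refine forall_congr' fun k => ?_
      cases k <;> rfl
    rw [hpre, hindep.measure_inter_preimage_eq_mul _ (fun k _ => hs k)]
    refine Finset.prod_congr rfl fun k _ => ?_
    cases k with
    | inl i =>
      simp only [Sum.elim_inl]
      rw [show m (Sum.inl i) = P.map (fun ω => X ω i) from rfl,
        Measure.map_apply (hXmeas i) (hs _)]
    | inr i =>
      simp only [Sum.elim_inr]
      rw [show m (Sum.inr i) = P.map (fun ω => X ω i) from rfl, ← hident i,
        Measure.map_apply (hX'meas i) (hs _)]
  have hprec : ∀ (e : (Fin n ⊕ Fin n) ≃ (Fin n ⊕ Fin n)),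
      Measurable (fun y : (Fin n ⊕ Fin n) → E => y ∘ e) :=
    fun e => measurable_pi_lambda _ fun k => measurable_pi_apply _
  -- permutation invariance of the product measure
  have hpi : ∀ (e : (Fin n ⊕ Fin n) ≃ (Fin n ⊕ Fin n)), (∀ k, m (e k) = m k) →
      (Measure.pi m).map (fun y : (Fin n ⊕ Fin n) → E => y ∘ e) = Measure.pi m := by
    intro e he
    have hme : (fun k => m (e k)) = m := funext he
    have h1 : MeasurePreserving
        ((MeasurableEquiv.piCongrLeft (fun _ : Fin n ⊕ Fin n => E) e).symm)
        (Measure.pi m) (Measure.pi fun k => m (e k)) :=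
      MeasurePreserving.symm _ (measurePreserving_piCongrLeft (μ := m) e)
    have h2 : (fun y : (Fin n ⊕ Fin n) → E => y ∘ e)
        = ⇑((MeasurableEquiv.piCongrLeft (fun _ : Fin n ⊕ Fin n => E) e).symm) := by
      funext y
      rfl
    rw [h2, h1.map_eq, hme]
  -- the integral-transfer lemma along measure-preserving permutations
  have key : ∀ (H : ((Fin n ⊕ Fin n) → E) → ℝ), Measurable H →
      ∀ (e : (Fin n ⊕ Fin n) ≃ (Fin n ⊕ Fin n)), (∀ k, m (e k) = m k) →
      ∫ ω, H (T ω ∘ e) ∂P = ∫ ω, H (T ω) ∂P := by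
    intro H hH e he
    have h1 : ∫ ω, H (T ω ∘ e) ∂P = ∫ y, H (y ∘ e) ∂(Measure.pi m) := by
      rw [← hmap]
      exact (integral_map hT.aemeasurable (hH.comp (hprec e)).aestronglyMeasurable).symm
    have h2 : ∫ y, H (y ∘ e) ∂(Measure.pi m) = ∫ y, H y ∂(Measure.pi m) := by
      conv_rhs => rw [← hpi e he]
      rw [integral_map (hprec e).aemeasurable hH.aestronglyMeasurable]
    have h3 : ∫ y, H y ∂(Measure.pi m) = ∫ ω, H (T ω) ∂P := by
      rw [← hmap]
      exact integral_map hT.aemeasurable hH.aestronglyMeasurable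
    exact h1.trans (h2.trans h3)
  have hswapm : ∀ B : Finset (Fin n), ∀ k, m (swapF B k) = m k := by
    intro B k
    rcases k with i | i <;> by_cases h : i ∈ B <;> simp [swapF, h, hm_def]
  -- pointwise identifications
  have hsel0 : ∀ ω, sel (∅ : Finset (Fin n)) (T ω) = X ω := by
    intro ω; funext i; simp [sel, hT_def]
  have hselU : ∀ ω, sel (Finset.univ : Finset (Fin n)) (T ω) = X' ω := by
    intro ω; funext i; simp [sel, hT_def]
  have hsub : ∀ (A : Finset (Fin n)) (ω : Ω), substRV X X' A ω = sel A (T ω) := by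
    intro A ω; funext i; by_cases h : i ∈ A <;> simp [substRV, sel, h, hT_def]
  have hupd : ∀ (A : Finset (Fin n)) (j : Fin n) (ω : Ω),
      Function.update (substRV X X' A ω) j (X' ω j) = sel (insert j A) (T ω) := by
    intro A j ω
    rw [hsub A ω, show X' ω j = T ω (Sum.inr j) from rfl, update_sel]
  have hupd0 : ∀ (j : Fin n) (ω : Ω),
      Function.update (X ω) j (X' ω j) = sel ({j} : Finset (Fin n)) (T ω) := by
    intro j ω
    rw [← hsel0 ω, show X' ω j = T ω (Sum.inr j) from rfl, update_sel]
    simp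
  -- each `sel B (T ·)` has the same law as `X`
  have hlaw : ∀ B : Finset (Fin n), P.map (fun ω => sel B (T ω)) = P.map X := by
    intro B
    have h1 : P.map (fun ω => sel B (T ω)) = (Measure.pi m).map (sel B) := by
      rw [← hmap, Measure.map_map (measurable_sel B) hT]
      rfl
    have hselcomp : (sel B : ((Fin n ⊕ Fin n) → E) → (Fin n → E))
        = (sel ∅) ∘ (fun y => y ∘ swapF B) := by
      funext y
      rw [Function.comp_apply, sel_swapF, symmDiff_set_empty]
    have h2 : (Measure.pi m).map (sel B) = (Measure.pi m).map (sel ∅) := by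
      rw [hselcomp, ← Measure.map_map (measurable_sel ∅) (hprec (swapF B)), hpi _ (hswapm B)]
    have h3 : (Measure.pi m).map (sel ∅) = P.map X := by
      rw [← hmap, Measure.map_map (measurable_sel ∅) hT,
        show (sel (∅ : Finset (Fin n)) ∘ T) = X from funext hsel0]
    rw [h1, h2, h3]
  -- L² bounds
  have hMemf : ∀ B : Finset (Fin n), MemLp (fun ω => f (sel B (T ω))) 2 P := by
    intro B
    have h0 : MemLp f 2 (P.map X) := by
      rw [memLp_map_measure_iff hf.aestronglyMeasurable hX.aemeasurable]
      exact hfL2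
    have h1 : MemLp f 2 (P.map (fun ω => sel B (T ω))) := by rw [hlaw B]; exact h0
    exact (memLp_map_measure_iff hf.aestronglyMeasurable
      ((measurable_sel B).comp hT).aemeasurable).1 h1
  have hMemg : ∀ B : Finset (Fin n), MemLp (fun ω => g (sel B (T ω))) 2 P := by
    intro B
    have h0 : MemLp g 2 (P.map X) := by
      rw [memLp_map_measure_iff hg.aestronglyMeasurable hX.aemeasurable]
      exact hgL2
    have h1 : MemLp g 2 (P.map (fun ω => sel B (T ω))) := by rw [hlaw B]; exact h0
    exact (memLp_map_measure_iff hg.aestronglyMeasurable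
      ((measurable_sel B).comp hT).aemeasurable).1 h1
  -- product of two L² functions is integrable
  have hInt : ∀ (φ ψ : Ω → ℝ), MemLp φ 2 P → MemLp ψ 2 P →
      Integrable (fun ω => φ ω * ψ ω) P := by
    intro φ ψ h1 h2
    have hpq : (1 : ℝ≥0∞) / 1 = 1 / 2 + 1 / 2 := by
      rw [ENNReal.div_add_div_same, one_div_one, one_add_one_eq_two]
      exact (ENNReal.div_self two_ne_zero ENNReal.ofNat_ne_top).symm
    have h3 : MemLp (φ • ψ) 1 P := h2.smul h1
    rw [← memLp_one_iff_integrable]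
    exact h3
  -- Step A : X' has the same one-dimensional image integrals as X
  have hstepA : ∫ ω, f (X' ω) ∂P = ∫ ω, f (X ω) ∂P := by
    have h := key (fun y => f (sel ∅ y)) (hf.comp (measurable_sel ∅)) (swapF Finset.univ)
      (hswapm Finset.univ)
    have hl : ∀ ω, sel (∅ : Finset (Fin n)) (T ω ∘ swapF Finset.univ) = X' ω := by
      intro ω
      rw [sel_swapF, symmDiff_univ_empty, hselU]
    simp only [hl, hsel0] at h
    exact h
  -- Step B : independence of g(X) and f(X')
  have hstepB : ∫ ω, g (X ω) * f (X' ω) ∂P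
      = (∫ ω, g (X ω) ∂P) * (∫ ω, f (X' ω) ∂P) := by
    set Φ := MeasurableEquiv.sumPiEquivProdPi (fun _ : Fin n ⊕ Fin n => E) with hPhi
    have hMP := measurePreserving_sumPiEquivProdPi m
    have trans : ∀ (H : ((Fin n ⊕ Fin n) → E) → ℝ), Measurable H →
        ∫ ω, H (T ω) ∂P = ∫ y, H y ∂(Measure.pi m) := by
      intro H hH
      rw [← hmap]
      exact (integral_map hT.aemeasurable hH.aestronglyMeasurable).symm
    have hfst : ∀ y : (Fin n ⊕ Fin n) → E, sel (∅ : Finset (Fin n)) y = (Φ y).1 := by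
      intro y; funext i
      simp [sel, hPhi, MeasurableEquiv.sumPiEquivProdPi, Equiv.sumPiEquivProdPi]
    have hsnd : ∀ y : (Fin n ⊕ Fin n) → E, sel (Finset.univ : Finset (Fin n)) y = (Φ y).2 := by
      intro y; funext i
      simp [sel, hPhi, MeasurableEquiv.sumPiEquivProdPi, Equiv.sumPiEquivProdPi]
    have e1 : ∫ ω, g (X ω) * f (X' ω) ∂P
        = ∫ p, g p.1 * f p.2 ∂((Measure.pi fun i => m (Sum.inl i)).prod
            (Measure.pi fun i => m (Sum.inr i))) := by
      have h1 := trans (fun y => g (sel ∅ y) * f (sel Finset.univ y))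
        ((hg.comp (measurable_sel ∅)).mul (hf.comp (measurable_sel Finset.univ)))
      simp only [hsel0, hselU] at h1
      rw [h1, ← hMP.integral_comp' (fun p => g p.1 * f p.2)]
      exact integral_congr_ae (ae_of_all _ fun y => congrArg₂ (fun a b => g a * f b) (hfst y) (hsnd y))
    have e2 : ∫ ω, g (X ω) ∂P = ∫ x, g x ∂(Measure.pi fun i => m (Sum.inl i)) := by
      have h1 := trans (fun y => g (sel ∅ y)) (hg.comp (measurable_sel ∅))
      simp only [hsel0] at h1
      have h2 : ∫ y, g (sel (∅ : Finset (Fin n)) y) ∂(Measure.pi m)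
          = ∫ p, g p.1 ∂((Measure.pi fun i => m (Sum.inl i)).prod
              (Measure.pi fun i => m (Sum.inr i))) := by
        rw [← hMP.integral_comp' (fun p => g p.1)]
        exact integral_congr_ae (ae_of_all _ fun y => congrArg g (hfst y))
      have h3 : ∫ p, g p.1 ∂((Measure.pi fun i => m (Sum.inl i)).prod
              (Measure.pi fun i => m (Sum.inr i)))
          = (∫ x, g x ∂(Measure.pi fun i => m (Sum.inl i)))
              * ∫ _x, (1 : ℝ) ∂(Measure.pi fun i => m (Sum.inr i)) := by
        rw [← integral_prod_mul g (fun _ => (1 : ℝ))]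
        simp
      rw [h1, h2, h3]
      simp
    have e3 : ∫ ω, f (X' ω) ∂P = ∫ x, f x ∂(Measure.pi fun i => m (Sum.inr i)) := by
      have h1 := trans (fun y => f (sel Finset.univ y)) (hf.comp (measurable_sel Finset.univ))
      simp only [hselU] at h1
      have h2 : ∫ y, f (sel (Finset.univ : Finset (Fin n)) y) ∂(Measure.pi m)
          = ∫ p, f p.2 ∂((Measure.pi fun i => m (Sum.inl i)).prod
              (Measure.pi fun i => m (Sum.inr i))) := by
        rw [← hMP.integral_comp' (fun p => f p.2)]
        exact integral_congr_ae (ae_of_all _ fun y => congrArg f (hsnd y))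
      have h3 : ∫ p, f p.2 ∂((Measure.pi fun i => m (Sum.inl i)).prod
              (Measure.pi fun i => m (Sum.inr i)))
          = (∫ _x, (1 : ℝ) ∂(Measure.pi fun i => m (Sum.inl i)))
              * ∫ x, f x ∂(Measure.pi fun i => m (Sum.inr i)) := by
        rw [← integral_prod_mul (fun _ => (1 : ℝ)) f]
        simp
      rw [h1, h2, h3]
      simp
    rw [e1, e2, e3, integral_prod_mul]
  -- telescoping identity, pointwise
  have hpoint : ∀ ω, f (X ω) - f (X' ω)
      = ∑ A ∈ (Finset.univ : Finset (Fin n)).powerset.filter (fun A => A ≠ Finset.univ),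
          kappa n A * ∑ j ∈ Aᶜ, (f (sel A (T ω)) - f (sel (insert j A) (T ω))) := by
    intro ω
    have h := telescope_sum n (fun A => f (sel A (T ω)))
    rw [hsel0, hselU] at h
    exact h.symm
  have hIntTerm : ∀ (A : Finset (Fin n)) (j : Fin n),
      Integrable (fun ω => g (X ω) * (f (sel A (T ω)) - f (sel (insert j A) (T ω)))) P :=
    fun A j => hInt _ _ hgL2 ((hMemf A).sub (hMemf (insert j A)))
  have hIntTerm' : ∀ (B A : Finset (Fin n)) (j : Fin n),
      Integrable (fun ω => g (sel B (T ω))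
        * (f (sel A (T ω)) - f (sel (insert j A) (T ω)))) P :=
    fun B A j => hInt _ _ (hMemg B) ((hMemf A).sub (hMemf (insert j A)))
  -- main decomposition of the covariance as a double sum
  have hmain : ∫ ω, g (X ω) * (f (X ω) - f (X' ω)) ∂P
      = ∑ A ∈ (Finset.univ : Finset (Fin n)).powerset.filter (fun A => A ≠ Finset.univ),
          kappa n A * ∑ j ∈ Aᶜ,
            ∫ ω, g (X ω) * (f (sel A (T ω)) - f (sel (insert j A) (T ω))) ∂P := by
    have hptw : ∀ ω, g (X ω) * (f (X ω) - f (X' ω))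
        = ∑ A ∈ (Finset.univ : Finset (Fin n)).powerset.filter (fun A => A ≠ Finset.univ),
            ∑ j ∈ Aᶜ, kappa n A
              * (g (X ω) * (f (sel A (T ω)) - f (sel (insert j A) (T ω)))) := by
      intro ω
      rw [hpoint ω, Finset.mul_sum]
      refine Finset.sum_congr rfl fun A _ => ?_
      rw [mul_left_comm, Finset.mul_sum, Finset.mul_sum]
    simp only [hptw]
    rw [integral_finset_sum _ (fun A _ =>
      integrable_finset_sum _ (fun j _ => (hIntTerm A j).const_mul _))]
    refine Finset.sum_congr rfl fun A _ => ?_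
    rw [integral_finset_sum _ (fun j _ => (hIntTerm A j).const_mul _), Finset.mul_sum]
    exact Finset.sum_congr rfl fun j _ => integral_const_mul _ _
  -- symmetrization in the coordinate j
  have hsym : ∀ (A : Finset (Fin n)) (j : Fin n), j ∉ A →
      ∫ ω, g (X ω) * (f (sel A (T ω)) - f (sel (insert j A) (T ω))) ∂P
      = (1 / 2) * ∫ ω, (g (X ω) - g (sel ({j} : Finset (Fin n)) (T ω)))
          * (f (sel A (T ω)) - f (sel (insert j A) (T ω))) ∂P := by
    intro A j hj
    have hmeasH : Measurable (fun y : (Fin n ⊕ Fin n) → E =>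
        g (sel ∅ y) * (f (sel A y) - f (sel (insert j A) y))) :=
      (hg.comp (measurable_sel ∅)).mul ((hf.comp (measurable_sel A)).sub
        (hf.comp (measurable_sel (insert j A))))
    have h := key _ hmeasH (swapF {j}) (hswapm {j})
    have hr1 : ∀ ω, sel (∅ : Finset (Fin n)) (T ω ∘ swapF {j})
        = sel ({j} : Finset (Fin n)) (T ω) := by
      intro ω; rw [sel_swapF, symmDiff_singleton_empty]
    have hr2 : ∀ ω, sel A (T ω ∘ swapF {j}) = sel (insert j A) (T ω) := by
      intro ω; rw [sel_swapF, symmDiff_singleton_set hj]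
    have hr3 : ∀ ω, sel (insert j A) (T ω ∘ swapF {j}) = sel A (T ω) := by
      intro ω; rw [sel_swapF, symmDiff_singleton_insert hj]
    simp only [hr1, hr2, hr3, hsel0] at h
    have hneg : ∫ ω, g (sel ({j} : Finset (Fin n)) (T ω))
          * (f (sel A (T ω)) - f (sel (insert j A) (T ω))) ∂P
        = - ∫ ω, g (X ω) * (f (sel A (T ω)) - f (sel (insert j A) (T ω))) ∂P := by
      rw [← h, ← integral_neg]
      congr 1
      funext ω
      ring
    have hsub2 : ∫ ω, (g (X ω) - g (sel ({j} : Finset (Fin n)) (T ω)))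
          * (f (sel A (T ω)) - f (sel (insert j A) (T ω))) ∂P
        = ∫ ω, g (X ω) * (f (sel A (T ω)) - f (sel (insert j A) (T ω))) ∂P
          - ∫ ω, g (sel ({j} : Finset (Fin n)) (T ω))
              * (f (sel A (T ω)) - f (sel (insert j A) (T ω))) ∂P := by
      simp only [sub_mul]
      exact integral_sub (hIntTerm A j) (hIntTerm' {j} A j)
    rw [hsub2, hneg]
    ring
  -- splitting the covariance
  have hsplit : ∫ ω, f (X ω) * g (X ω) ∂P
        - (∫ ω, f (X ω) ∂P) * (∫ ω, g (X ω) ∂P)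
      = ∫ ω, g (X ω) * (f (X ω) - f (X' ω)) ∂P := by
    have hint1 : Integrable (fun ω => g (X ω) * f (X ω)) P := hInt _ _ hgL2 hfL2
    have hint2 : Integrable (fun ω => g (X ω) * f (X' ω)) P := by
      have h := hInt _ _ hgL2 (hMemf Finset.univ)
      simpa only [hselU] using h
    have hR : ∫ ω, g (X ω) * (f (X ω) - f (X' ω)) ∂P
        = ∫ ω, g (X ω) * f (X ω) ∂P - ∫ ω, g (X ω) * f (X' ω) ∂P := by
      simp only [mul_sub]
      exact integral_sub hint1 hint2
    have hcomm : ∫ ω, f (X ω) * g (X ω) ∂P = ∫ ω, g (X ω) * f (X ω) ∂P := by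
      have : (fun ω => f (X ω) * g (X ω)) = fun ω => g (X ω) * f (X ω) := by
        funext ω; ring
      rw [this]
    rw [hR, hstepB, hstepA, hcomm]
    ring
  -- rewrite the statement's integrand in terms of `sel`
  have hRHS : ∀ (A : Finset (Fin n)) (j : Fin n),
      ∫ ω, (g (X ω) - g (Function.update (X ω) j (X' ω j))) *
          (f (substRV X X' A ω) - f (Function.update (substRV X X' A ω) j (X' ω j))) ∂P
      = ∫ ω, (g (X ω) - g (sel ({j} : Finset (Fin n)) (T ω)))
          * (f (sel A (T ω)) - f (sel (insert j A) (T ω))) ∂P := by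
    intro A j
    congr 1
    funext ω
    rw [hupd0, hupd, hsub]
  -- put everything together
  rw [hsplit, hmain, Finset.mul_sum]
  refine Finset.sum_congr rfl fun A hA => ?_
  have hj1 : ∑ j ∈ Aᶜ, ∫ ω, g (X ω) * (f (sel A (T ω)) - f (sel (insert j A) (T ω))) ∂P
      = ∑ j ∈ Aᶜ, (1 / 2) * ∫ ω, (g (X ω) - g (sel ({j} : Finset (Fin n)) (T ω)))
          * (f (sel A (T ω)) - f (sel (insert j A) (T ω))) ∂P :=
    Finset.sum_congr rfl fun j hj => hsym A j (Finset.mem_compl.mp hj)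
  have hj2 : ∑ j ∈ Aᶜ, ∫ ω, (g (X ω) - g (Function.update (X ω) j (X' ω j))) *
          (f (substRV X X' A ω) - f (Function.update (substRV X X' A ω) j (X' ω j))) ∂P
      = ∑ j ∈ Aᶜ, ∫ ω, (g (X ω) - g (sel ({j} : Finset (Fin n)) (T ω)))
          * (f (sel A (T ω)) - f (sel (insert j A) (T ω))) ∂P :=
    Finset.sum_congr rfl fun j _ => hRHS A j
  rw [hj1, hj2, ← Finset.mul_sum]
  ring
end

section
/- Let Φ denote the standard normal cumulative distribution function. For t ∈ ℝ define g_t : ℝ → ℝ by g_t(w) := e^{w²/2} ∫_{−∞}^{w} (1_{x ≤ t} − Φ(t)) e^{−x²/2} dx (the standard solution of the Stein equation g'(w) − w g(w) = 1_{w ≤ t} − Φ(t)), and set g'_t(w) := w g_t(w) + 1_{w ≤ t} − Φ(t) for every w ∈ ℝ (which agrees with the derivative of g_t at every w ≠ t and adopts the convention g'_t(t) := t g_t(t) + 1 − Φ(t)). Then for all w, h ∈ ℝ: |g_t(w+h) − g_t(w) − g'_t(w)·h| ≤ (h²/2)·(|w| + √(2π)/4) + |h|·( 1_{[w, w+h)}(t)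 + 1_{[w+h, w)}(t) ). -/
open MeasureTheory
open Set

/-- The standard normal cumulative distribution function `Φ`. -/
noncomputable def stdNormalCDF (t : ℝ) : ℝ :=
  ∫ x in Set.Iic t, Real.exp (-x ^ 2 / 2) / Real.sqrt (2 * Real.pi)

/-- The standard solution `g_t` of the Stein equation
`g'(w) - w g(w) = 1_{w ≤ t} - Φ(t)`. -/
noncomputable def steinSol (t w : ℝ) : ℝ :=
  Real.exp (w ^ 2 / 2) *
    ∫ x in Set.Iic w, ((if x ≤ t then (1 : ℝ) else 0) - stdNormalCDF t) * Real.exp (-x ^ 2 / 2)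

/-- The derivative of `g_t`, defined for every `w` via the Stein equation, i.e. with the
convention `g'_t(t) := t g_t(t) + 1 - Φ(t)`. -/
noncomputable def steinSol' (t w : ℝ) : ℝ :=
  w * steinSol t w + (if w ≤ t then (1 : ℝ) else 0) - stdNormalCDF t

noncomputable def gph (x : ℝ) : ℝ := Real.exp (-x ^ 2 / 2)

lemma gph_eq : gph = fun x => Real.exp (-(1/2) * x ^ 2) := by
  funext x; simp only [gph]; ring_nf

lemma continuous_gph : Continuous gph := by
  unfold gph; fun_prop

lemma gph_pos (x : ℝ) : 0 < gph x := Real.exp_pos _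

lemma gph_le_one (x : ℝ) : gph x ≤ 1 := by
  unfold gph
  apply Real.exp_le_one_iff.2
  nlinarith [sq_nonneg x]

lemma integrable_gph : Integrable gph := by
  rw [gph_eq]; exact integrable_exp_neg_mul_sq (by norm_num)

lemma integral_gph : ∫ x, gph x = Real.sqrt (2 * Real.pi) := by
  rw [gph_eq]
  rw [integral_gaussian]
  rw [show Real.pi / (1/2) = 2 * Real.pi by ring]

lemma exp_mul_gph (x : ℝ) : Real.exp (x ^ 2 / 2) * gph x = 1 := by
  unfold gph
  rw [← Real.exp_add]
  ring_nf
  exact Real.exp_zero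

noncomputable def Nf (w : ℝ) : ℝ := ∫ x in Set.Iic w, gph x
noncomputable def Nc (w : ℝ) : ℝ := ∫ x in Set.Ioi w, gph x

lemma Nf_add_Nc (w : ℝ) : Nf w + Nc w = Real.sqrt (2 * Real.pi) := by
  rw [← integral_gph]
  exact intervalIntegral.integral_Iic_add_Ioi integrable_gph.integrableOn integrable_gph.integrableOn

lemma Nf_nonneg (w : ℝ) : 0 ≤ Nf w :=
  setIntegral_nonneg measurableSet_Iic fun x _ => (gph_pos x).le

lemma Nc_nonneg (w : ℝ) : 0 ≤ Nc w :=
  setIntegral_nonneg measurableSet_Ioi fun x _ => (gph_pos x).le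

lemma Nf_mono : Monotone Nf := fun a b hab =>
  setIntegral_mono_set integrable_gph.integrableOn
    (Filter.Eventually.of_forall fun x => (gph_pos x).le)
    (HasSubset.Subset.eventuallyLE (Iic_subset_Iic.2 hab))

lemma Nc_anti : Antitone Nc := fun a b hab => by
  have h1 := Nf_add_Nc a
  have h2 := Nf_add_Nc b
  have := Nf_mono hab
  linarith

lemma Nf_le (w : ℝ) : Nf w ≤ Real.sqrt (2 * Real.pi) := by
  have := Nf_add_Nc w; have := Nc_nonneg w; linarith

lemma Nc_le (w : ℝ) : Nc w ≤ Real.sqrt (2 * Real.pi) := by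
  have := Nf_add_Nc w; have := Nf_nonneg w; linarith

lemma sqrt_two_pi_pos : 0 < Real.sqrt (2 * Real.pi) :=
  Real.sqrt_pos.2 (by positivity)

lemma cdf_eq (t : ℝ) : stdNormalCDF t = Nf t / Real.sqrt (2 * Real.pi) := by
  unfold stdNormalCDF Nf gph
  rw [integral_div]

lemma cdf_nonneg (t : ℝ) : 0 ≤ stdNormalCDF t := by
  rw [cdf_eq]; exact div_nonneg (Nf_nonneg t) sqrt_two_pi_pos.le

lemma cdf_le_one (t : ℝ) : stdNormalCDF t ≤ 1 := by
  rw [cdf_eq]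
  rw [div_le_one sqrt_two_pi_pos]
  exact Nf_le t

lemma one_sub_cdf (t : ℝ) : 1 - stdNormalCDF t = Nc t / Real.sqrt (2 * Real.pi) := by
  rw [cdf_eq, eq_div_iff sqrt_two_pi_pos.ne', sub_mul, div_mul_cancel₀ _ sqrt_two_pi_pos.ne',
    one_mul, ← Nf_add_Nc t]
  ring

lemma integrable_mul_gph : Integrable (fun x => x * gph x) := by
  rw [gph_eq]; exact integrable_mul_exp_neg_mul_sq (by norm_num)

lemma tendsto_neg_gph (l : Filter ℝ) (h : Filter.Tendsto (fun x => |x|) l Filter.atTop) :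
    Filter.Tendsto (fun x => -gph x) l (nhds 0) := by
  rw [show (0:ℝ) = -0 by ring]
  apply Filter.Tendsto.neg
  unfold gph
  apply Real.tendsto_exp_atBot.comp
  have h2 : Filter.Tendsto (fun x : ℝ => x ^ 2) l Filter.atTop := by
    refine ((Filter.tendsto_pow_atTop (two_ne_zero)).comp h).congr fun x => ?_
    simp [sq_abs]
  have h3 : Filter.Tendsto (fun x : ℝ => -x ^ 2) l Filter.atBot :=
    Filter.tendsto_neg_atTop_atBot.comp h2
  exact h3.atBot_div_const (by norm_num)

lemma tendsto_gph_atBot : Filter.Tendsto (fun x => -gph x) Filter.atBot (nhds 0) :=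
  tendsto_neg_gph _ Filter.tendsto_abs_atBot_atTop

lemma hasDerivAt_neg_gph (x : ℝ) : HasDerivAt (fun y => -gph y) (x * gph x) x := by
  unfold gph
  have h1 : HasDerivAt (fun y : ℝ => -y ^ 2 / 2) (-x) x := by
    have := ((hasDerivAt_pow 2 x).neg).div_const 2
    exact this.congr_deriv (by ring)
  have := (h1.exp).neg
  exact this.congr_deriv (by ring)

lemma integral_mul_gph_Iic (w : ℝ) : ∫ x in Set.Iic w, x * gph x = -gph w := by
  have := MeasureTheory.integral_Iic_of_hasDerivAt_of_tendsto
    (f := fun y => -gph y) (f' := fun x => x * gph x) (a := w)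
    ((continuous_gph.neg).continuousWithinAt)
    (fun x _ => hasDerivAt_neg_gph x)
    integrable_mul_gph.integrableOn tendsto_gph_atBot
  simpa using this

lemma integral_mul_gph_Ioi (w : ℝ) : ∫ x in Set.Ioi w, x * gph x = gph w := by
  have htop : Filter.Tendsto (fun x => -gph x) Filter.atTop (nhds 0) :=
    tendsto_neg_gph _ Filter.tendsto_abs_atTop_atTop
  have := MeasureTheory.integral_Ioi_of_hasDerivAt_of_tendsto
    (f := fun y => -gph y) (f' := fun x => x * gph x) (a := w)
    ((continuous_gph.neg).continuousWithinAt)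
    (fun x _ => hasDerivAt_neg_gph x)
    integrable_mul_gph.integrableOn htop
  rw [this]; ring

/-- Gaussian tail bound on the left. -/
lemma tail_left {w : ℝ} (hw : w ≤ 0) : -w * (Real.exp (w ^ 2 / 2) * Nf w) ≤ 1 := by
  rcases eq_or_lt_of_le hw with rfl | hw'
  · norm_num
  have hN : Nf w ≤ gph w / (-w) := by
    have hmono : Nf w ≤ ∫ x in Set.Iic w, (x / w) * gph x := by
      apply setIntegral_mono_on integrable_gph.integrableOn
        (integrable_mul_gph.integrableOn.div_const w |>.congr ?_) measurableSet_Iic ?_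
      · filter_upwards with x; ring
      · intro x hx
        have hx' : x ≤ w := hx
        have h1 : 1 ≤ x / w := by
          rw [le_div_iff_of_neg hw']; linarith
        nlinarith [gph_pos x]
    have : ∫ x in Set.Iic w, (x / w) * gph x = gph w / (-w) := by
      have : ∫ x in Set.Iic w, (x / w) * gph x = (∫ x in Set.Iic w, x * gph x) / w := by
        rw [← integral_div]; congr 1; funext x; ring
      rw [this, integral_mul_gph_Iic, neg_div, div_neg]
    linarith [hmono, this.le, this.ge]
  have h1 : -w * Nf w ≤ gph w := by
    rw [div_eq_mul_inv] at hN
    have hw2 : 0 < -w := by linarith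
    calc -w * Nf w ≤ -w * (gph w * (-w)⁻¹) := by
          apply mul_le_mul_of_nonneg_left _ hw2.le
          rwa [mul_comm (gph w)] at hN ⊢
      _ = gph w := by field_simp [hw'.ne]
  calc -w * (Real.exp (w ^ 2 / 2) * Nf w) = Real.exp (w ^ 2 / 2) * (-w * Nf w) := by ring
    _ ≤ Real.exp (w ^ 2 / 2) * gph w := by
        apply mul_le_mul_of_nonneg_left h1 (Real.exp_pos _).le
    _ = 1 := exp_mul_gph w

/-- Gaussian tail bound on the right. -/
lemma tail_right {w : ℝ} (hw : 0 ≤ w) : w * (Real.exp (w ^ 2 / 2) * Nc w) ≤ 1 := by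
  rcases eq_or_lt_of_le hw with rfl | hw'
  · simp
  have hN : Nc w ≤ gph w / w := by
    have hmono : Nc w ≤ ∫ x in Set.Ioi w, (x / w) * gph x := by
      apply setIntegral_mono_on integrable_gph.integrableOn
        (integrable_mul_gph.integrableOn.div_const w |>.congr ?_) measurableSet_Ioi ?_
      · filter_upwards with x; ring
      · intro x hx
        have hx' : w < x := hx
        have h1 : 1 ≤ x / w := by
          rw [le_div_iff₀ hw']; linarith
        nlinarith [gph_pos x]
    have : ∫ x in Set.Ioi w, (x / w) * gph x = gph w / w := by
      have : ∫ x in Set.Ioi w, (x / w) * gph x = (∫ x in Set.Ioi w, x * gph x) / w := by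
        rw [← integral_div]; congr 1; funext x; ring
      rw [this, integral_mul_gph_Ioi]
    linarith [hmono, this.le]
  have h1 : w * Nc w ≤ gph w := by
    rw [le_div_iff₀ hw'] at hN; linarith [hN]
  calc w * (Real.exp (w ^ 2 / 2) * Nc w) = Real.exp (w ^ 2 / 2) * (w * Nc w) := by ring
    _ ≤ Real.exp (w ^ 2 / 2) * gph w := by
        apply mul_le_mul_of_nonneg_left h1 (Real.exp_pos _).le
    _ = 1 := exp_mul_gph w

noncomputable def If (w : ℝ) : ℝ := ∫ x in (0:ℝ)..w, gph x
noncomputable def Jf (w : ℝ) : ℝ :=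
  ∫ s in (0:ℝ)..1, Real.exp (-w ^ 2 * (1 + s ^ 2) / 2) / (1 + s ^ 2)

lemma hasDerivAt_If (w : ℝ) : HasDerivAt If (gph w) w :=
  intervalIntegral.integral_hasDerivAt_right
    (continuous_gph.intervalIntegrable _ _)
    (continuous_gph.stronglyMeasurableAtFilter _ _)
    continuous_gph.continuousAt

lemma one_add_sq_pos (s : ℝ) : (0:ℝ) < 1 + s ^ 2 := by positivity

lemma hasDerivAt_Jf (w : ℝ) : HasDerivAt Jf (-(gph w * If w)) w := by
  have key : HasDerivAt Jf (∫ s in (0:ℝ)..1, -w * Real.exp (-w ^ 2 * (1 + s ^ 2) / 2)) w := by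
    have := (intervalIntegral.hasDerivAt_integral_of_dominated_loc_of_deriv_le
      (F := fun w s => Real.exp (-w ^ 2 * (1 + s ^ 2) / 2) / (1 + s ^ 2))
      (F' := fun w s => -w * Real.exp (-w ^ 2 * (1 + s ^ 2) / 2))
      (x₀ := w) (a := (0:ℝ)) (b := 1) (μ := volume) (bound := fun _ => |w| + 1)
      (s := Metric.ball w 1) (Metric.ball_mem_nhds w one_pos) ?_ ?_ ?_ ?_ ?_ ?_).2
    · exact this
    · filter_upwards with x
      apply Continuous.aestronglyMeasurable
      exact Continuous.div (by fun_prop) (by fun_prop) fun s => (one_add_sq_pos s).ne'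
    · apply Continuous.intervalIntegrable
      exact Continuous.div (by fun_prop) (by fun_prop) fun s => (one_add_sq_pos s).ne'
    · apply Continuous.aestronglyMeasurable
      fun_prop
    · filter_upwards with s _ x hx
      have h1 : Real.exp (-x ^ 2 * (1 + s ^ 2) / 2) ≤ 1 := by
        apply Real.exp_le_one_iff.2; nlinarith [sq_nonneg x, sq_nonneg s, sq_nonneg (x*s)]
      have h2 : |x| ≤ |w| + 1 := by
        have := abs_sub_abs_le_abs_sub x w
        have hd : |x - w| ≤ 1 := by
          rw [Metric.mem_ball, Real.dist_eq] at hx; exact hx.le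
        linarith
      rw [norm_mul, norm_neg, Real.norm_eq_abs, Real.norm_eq_abs, Real.abs_exp]
      calc |x| * Real.exp (-x ^ 2 * (1 + s ^ 2) / 2) ≤ (|w| + 1) * 1 := by
            apply mul_le_mul h2 h1 (Real.exp_pos _).le (by positivity)
        _ = |w| + 1 := by ring
    · apply Continuous.intervalIntegrable; fun_prop
    · filter_upwards with s _ x _
      have h1 : HasDerivAt (fun x : ℝ => -x ^ 2 * (1 + s ^ 2) / 2)
          (-x * (1 + s ^ 2)) x := by
        have := (((hasDerivAt_pow 2 x).neg).const_mul ((1 + s ^ 2) / 2))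
        refine (this.congr_deriv ?_).congr_of_eventuallyEq (Filter.Eventually.of_forall fun y => ?_)
        · ring
        · simp only [Pi.neg_apply]; ring
      have := (h1.exp).div_const (1 + s ^ 2)
      refine this.congr_deriv ?_
      field_simp
  convert key using 1
  have h1 : ∀ s : ℝ, -w * Real.exp (-w ^ 2 * (1 + s ^ 2) / 2)
      = -(gph w * (w * gph (w * s))) := by
    intro s
    unfold gph
    have h := Real.exp_add (-w ^ 2 / 2) (-(w * s) ^ 2 / 2)
    have h2 : -w ^ 2 / 2 + -(w * s) ^ 2 / 2 = -w ^ 2 * (1 + s ^ 2) / 2 := by ring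
    rw [h2] at h
    rw [h]; ring
  rw [intervalIntegral.integral_congr (g := fun s => -(gph w * (w * gph (w * s))))
    (fun s _ => h1 s)]
  rw [intervalIntegral.integral_neg, intervalIntegral.integral_const_mul]
  have h2 : (∫ s in (0:ℝ)..1, w * gph (w * s)) = If w := by
    have := intervalIntegral.smul_integral_comp_mul_left (a := (0:ℝ)) (b := 1) gph w
    simp only [smul_eq_mul, mul_zero, mul_one] at this
    rw [← intervalIntegral.integral_const_mul] at this
    rw [this]; rfl
  rw [h2]

lemma If_Jf_const (w : ℝ) : If w ^ 2 / 2 + Jf w = Real.pi / 4 := by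
  have hder : ∀ x : ℝ, HasDerivAt (fun y => If y ^ 2 / 2 + Jf y) 0 x := by
    intro x
    have h1 : HasDerivAt (fun y => If y ^ 2 / 2) (If x * gph x) x := by
      have := ((hasDerivAt_If x).pow 2).div_const 2
      exact this.congr_deriv (by ring)
    have := h1.add (hasDerivAt_Jf x)
    exact this.congr_deriv (by ring)
  have hconst : ∀ x : ℝ, If x ^ 2 / 2 + Jf x = If 0 ^ 2 / 2 + Jf 0 := by
    intro x
    have := is_const_of_deriv_eq_zero (f := fun y => If y ^ 2 / 2 + Jf y)
      (fun y => (hder y).differentiableAt) (fun y => (hder y).deriv) x 0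
    exact this
  rw [hconst w]
  have hIf0 : If 0 = 0 := intervalIntegral.integral_same
  have hJf0 : Jf 0 = Real.pi / 4 := by
    unfold Jf
    have : ∀ s ∈ Set.uIcc (0:ℝ) 1, Real.exp (-(0:ℝ) ^ 2 * (1 + s ^ 2) / 2) / (1 + s ^ 2)
        = 1 / (1 + s ^ 2) := by
      intro s _
      norm_num
    rw [intervalIntegral.integral_congr this, integral_one_div_one_add_sq, Real.arctan_one,
      Real.arctan_zero]
    ring
  rw [hIf0, hJf0]; norm_num

lemma Jf_le (w : ℝ) : Jf w ≤ Real.pi / 4 * gph w := by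
  unfold Jf
  have key : ∀ s ∈ Set.uIcc (0:ℝ) 1, Real.exp (-w ^ 2 * (1 + s ^ 2) / 2) / (1 + s ^ 2)
      ≤ gph w * (1 / (1 + s ^ 2)) := by
    intro s _
    rw [gph]
    have h1 : Real.exp (-w ^ 2 * (1 + s ^ 2) / 2) ≤ Real.exp (-w ^ 2 / 2) :=
      Real.exp_le_exp.2 (by nlinarith [sq_nonneg (w * s)])
    rw [div_le_iff₀ (one_add_sq_pos s)]
    calc Real.exp (-w ^ 2 * (1 + s ^ 2) / 2) ≤ Real.exp (-w ^ 2 / 2) := h1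
      _ = Real.exp (-w ^ 2 / 2) * (1 / (1 + s ^ 2)) * (1 + s ^ 2) := by
          field_simp
  calc (∫ s in (0:ℝ)..1, Real.exp (-w ^ 2 * (1 + s ^ 2) / 2) / (1 + s ^ 2))
      ≤ ∫ s in (0:ℝ)..1, gph w * (1 / (1 + s ^ 2)) := by
        apply intervalIntegral.integral_mono_on (by norm_num) _ _ fun s hs =>
          key s (by rw [Set.uIcc_of_le (by norm_num : (0:ℝ) ≤ 1)]; exact hs)
        · apply Continuous.intervalIntegrable
          exact Continuous.div (by fun_prop) (by fun_prop) fun s => (one_add_sq_pos s).ne'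
        · apply Continuous.intervalIntegrable
          exact Continuous.mul continuous_const
            (Continuous.div (by fun_prop) (by fun_prop) fun s => (one_add_sq_pos s).ne')
    _ = Real.pi / 4 * gph w := by
        rw [intervalIntegral.integral_const_mul, integral_one_div_one_add_sq, Real.arctan_one,
          Real.arctan_zero]
        ring

lemma Nf_eq_If (w : ℝ) : Nf w = Real.sqrt (2 * Real.pi) / 2 + If w := by
  have h1 : Nf w - Nf 0 = If w :=
    intervalIntegral.integral_Iic_sub_Iic integrable_gph.integrableOn integrable_gph.integrableOn
  have h2 : Nc 0 = Real.sqrt (2 * Real.pi) / 2 := by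
    unfold Nc
    rw [gph_eq]
    rw [integral_gaussian_Ioi]
    rw [show Real.pi / (1/2) = 2 * Real.pi by ring]
  have h3 := Nf_add_Nc 0
  linarith

/-- The sharp Gaussian product bound: `N(w) Ñ(w) ≤ (π/2) e^{-w²/2}`. -/
lemma sharp_product (w : ℝ) : Nf w * Nc w ≤ Real.pi / 2 * gph w := by
  have h1 : Nc w = Real.sqrt (2 * Real.pi) / 2 - If w := by
    have := Nf_add_Nc w
    have := Nf_eq_If w
    linarith
  have h2 : Nf w * Nc w = Real.pi / 2 - If w ^ 2 := by
    rw [Nf_eq_If, h1]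
    have hs : Real.sqrt (2 * Real.pi) ^ 2 = 2 * Real.pi :=
      Real.sq_sqrt (by positivity)
    nlinarith [hs]
  have h3 := If_Jf_const w
  have h4 := Jf_le w
  nlinarith


noncomputable def ff (t x : ℝ) : ℝ := ((if x ≤ t then (1 : ℝ) else 0) - stdNormalCDF t) * gph x
noncomputable def Fint (t w : ℝ) : ℝ := ∫ x in Set.Iic w, ff t x

lemma steinSol_eq (t w : ℝ) : steinSol t w = Real.exp (w ^ 2 / 2) * Fint t w := rfl

lemma measurable_ind (t : ℝ) : Measurable (fun x : ℝ => if x ≤ t then (1:ℝ) else 0) := by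
  apply Measurable.ite (measurableSet_Iic) measurable_const measurable_const

lemma integrable_ff (t : ℝ) : Integrable (ff t) := by
  apply Integrable.bdd_mul (c := 1 + stdNormalCDF t) integrable_gph
  · exact ((measurable_ind t).sub measurable_const).aestronglyMeasurable
  · refine Filter.Eventually.of_forall fun x => ?_
    have h1 := cdf_nonneg t
    have h2 := cdf_le_one t
    rw [Real.norm_eq_abs, abs_le]
    by_cases hx : x ≤ t <;> simp [hx] <;>
      first
      | (constructor <;> linarith)
      | linarith

lemma Fint_left {t w : ℝ} (h : w ≤ t) :
    Fint t w = (1 - stdNormalCDF t) * Nf w := by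
  unfold Fint Nf
  rw [← MeasureTheory.integral_const_mul]
  apply setIntegral_congr_fun measurableSet_Iic
  intro x hx
  have : x ≤ t := le_trans hx h
  simp [ff, this]

lemma Fint_univ (t : ℝ) : ∫ x, ff t x = 0 := by
  have h1 : ∀ x, ff t x = (if x ≤ t then (1:ℝ) else 0) * gph x - stdNormalCDF t * gph x := by
    intro x; unfold ff; ring
  have h2 : Integrable fun x => (if x ≤ t then (1:ℝ) else 0) * gph x := by
    apply Integrable.bdd_mul (c := 1) integrable_gph (measurable_ind t).aestronglyMeasurable
    refine Filter.Eventually.of_forall fun x => ?_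
    by_cases hx : x ≤ t <;> simp [hx]
  have h3 : (fun x => (if x ≤ t then (1:ℝ) else 0) * gph x) = Set.indicator (Set.Iic t) gph := by
    funext x
    by_cases hx : x ≤ t <;> simp [Set.indicator, Set.mem_Iic, hx]
  calc ∫ x, ff t x = (∫ x, (if x ≤ t then (1:ℝ) else 0) * gph x) - ∫ x, stdNormalCDF t * gph x := by
        simp_rw [h1]
        exact integral_sub h2 (integrable_gph.const_mul _)
    _ = Nf t - stdNormalCDF t * Real.sqrt (2 * Real.pi) := by
        rw [h3, integral_indicator measurableSet_Iic, MeasureTheory.integral_const_mul, integral_gph]; rfl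
    _ = 0 := by
        rw [cdf_eq]
        field_simp
        ring

lemma Fint_right {t w : ℝ} (h : t ≤ w) :
    Fint t w = stdNormalCDF t * Nc w := by
  have h1 : Fint t w + ∫ x in Set.Ioi w, ff t x = 0 := by
    rw [← Fint_univ t]
    exact intervalIntegral.integral_Iic_add_Ioi (integrable_ff t).integrableOn
      (integrable_ff t).integrableOn
  have h2 : ∫ x in Set.Ioi w, ff t x = -(stdNormalCDF t * Nc w) := by
    unfold Nc
    rw [← MeasureTheory.integral_const_mul, ← integral_neg]
    apply setIntegral_congr_fun measurableSet_Ioi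
    intro x hx
    have hx' : ¬ (x ≤ t) := by
      simp only [Set.mem_Ioi] at hx
      push_neg
      exact lt_of_le_of_lt h hx
    simp [ff, hx']
  linarith

lemma steinSol_nonneg (t w : ℝ) : 0 ≤ steinSol t w := by
  rw [steinSol_eq]
  rcases le_total w t with h | h
  · rw [Fint_left h]
    have h1 := cdf_le_one t
    exact mul_nonneg (Real.exp_pos _).le
      (mul_nonneg (by linarith) (Nf_nonneg w))
  · rw [Fint_right h]
    have := cdf_nonneg t
    have := Nc_nonneg w
    positivity

lemma pi_div_sqrt : Real.pi / 2 / Real.sqrt (2 * Real.pi) = Real.sqrt (2 * Real.pi) / 4 := by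
  have hs : Real.sqrt (2 * Real.pi) * Real.sqrt (2 * Real.pi) = 2 * Real.pi :=
    Real.mul_self_sqrt (by positivity)
  rw [div_eq_div_iff sqrt_two_pi_pos.ne' (by norm_num : (4:ℝ) ≠ 0), hs]
  ring

lemma steinSol_le (t w : ℝ) : steinSol t w ≤ Real.sqrt (2 * Real.pi) / 4 := by
  have hkey : Real.exp (w ^ 2 / 2) * (Nf w * Nc w / Real.sqrt (2 * Real.pi))
      ≤ Real.sqrt (2 * Real.pi) / 4 := by
    have h1 : Nf w * Nc w / Real.sqrt (2 * Real.pi)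
        ≤ Real.pi / 2 * gph w / Real.sqrt (2 * Real.pi) := by
      exact (div_le_div_iff_of_pos_right sqrt_two_pi_pos).2 (sharp_product w)
    calc Real.exp (w ^ 2 / 2) * (Nf w * Nc w / Real.sqrt (2 * Real.pi))
        ≤ Real.exp (w ^ 2 / 2) * (Real.pi / 2 * gph w / Real.sqrt (2 * Real.pi)) := by
          apply mul_le_mul_of_nonneg_left h1 (Real.exp_pos _).le
      _ = (Real.exp (w ^ 2 / 2) * gph w) * (Real.pi / 2 / Real.sqrt (2 * Real.pi)) := by ring
      _ = Real.sqrt (2 * Real.pi) / 4 := by rw [exp_mul_gph, pi_div_sqrt, one_mul]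
  rw [steinSol_eq]
  rcases le_total w t with h | h
  · rw [Fint_left h, one_sub_cdf]
    have h2 : Nc t / Real.sqrt (2 * Real.pi) * Nf w ≤ Nf w * Nc w / Real.sqrt (2 * Real.pi) := by
      rw [div_mul_eq_mul_div, mul_comm (Nc t)]
      exact (div_le_div_iff_of_pos_right sqrt_two_pi_pos).2
        (mul_le_mul_of_nonneg_left (Nc_anti h) (Nf_nonneg w))
    calc Real.exp (w ^ 2 / 2) * (Nc t / Real.sqrt (2 * Real.pi) * Nf w)
        ≤ Real.exp (w ^ 2 / 2) * (Nf w * Nc w / Real.sqrt (2 * Real.pi)) :=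
          mul_le_mul_of_nonneg_left h2 (Real.exp_pos _).le
      _ ≤ _ := hkey
  · rw [Fint_right h, cdf_eq]
    have h2 : Nf t / Real.sqrt (2 * Real.pi) * Nc w ≤ Nf w * Nc w / Real.sqrt (2 * Real.pi) := by
      rw [div_mul_eq_mul_div]
      exact (div_le_div_iff_of_pos_right sqrt_two_pi_pos).2
        (mul_le_mul_of_nonneg_right (Nf_mono h) (Nc_nonneg w))
    calc Real.exp (w ^ 2 / 2) * (Nf t / Real.sqrt (2 * Real.pi) * Nc w)
        ≤ Real.exp (w ^ 2 / 2) * (Nf w * Nc w / Real.sqrt (2 * Real.pi)) :=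
          mul_le_mul_of_nonneg_left h2 (Real.exp_pos _).le
      _ ≤ _ := hkey

lemma abs_steinSol'_le (t w : ℝ) : |steinSol' t w| ≤ 1 := by
  set E := Real.exp (w ^ 2 / 2) with hE
  set s := Real.sqrt (2 * Real.pi) with hs
  have hspos : 0 < s := sqrt_two_pi_pos
  have hsum : Nf w + Nc w = s := Nf_add_Nc w
  have hNf := Nf_nonneg w
  have hNc := Nc_nonneg w
  have hEpos : (0:ℝ) < E := Real.exp_pos _
  rw [abs_le]
  rcases le_or_gt w t with hwt | hwt
  · -- w ≤ t, indicator = 1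
    have hg : steinSol t w = E * ((1 - stdNormalCDF t) * Nf w) := by
      rw [steinSol_eq, Fint_left hwt]
    have hcdf : 1 - stdNormalCDF t = Nc t / s := one_sub_cdf t
    have hs' : steinSol' t w = (Nc t * (w * (E * Nf w)) + Nc t) / s := by
      rw [steinSol', hg, hcdf, if_pos hwt]
      have : stdNormalCDF t = 1 - Nc t / s := by rw [← hcdf]; ring
      rw [this]
      field_simp
      ring
    have hNct : 0 ≤ Nc t := Nc_nonneg t
    have hNct_le : Nc t ≤ Nc w := Nc_anti hwt
    rw [hs']
    rcases le_or_gt w 0 with hw0 | hw0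
    · -- w ≤ 0
      have htl : -w * (E * Nf w) ≤ 1 := tail_left hw0
      have hP : -(E * Nf w) * w ≤ 1 := by nlinarith
      constructor
      · rw [le_div_iff₀ hspos]
        have hge : -1 ≤ w * (E * Nf w) := by nlinarith
        have h1 := mul_le_mul_of_nonneg_left hge hNct
        have h2 : Nc t ≤ s := by linarith
        nlinarith
      · rw [div_le_one hspos]
        have h1 : Nc t * (w * (E * Nf w)) ≤ 0 := by
          apply mul_nonpos_of_nonneg_of_nonpos hNct
          exact mul_nonpos_of_nonpos_of_nonneg hw0 (mul_nonneg hEpos.le hNf)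
        linarith
    · -- 0 < w
      have htr : w * (E * Nc w) ≤ 1 := tail_right hw0.le
      have hwENf : 0 ≤ w * (E * Nf w) := by positivity
      constructor
      · rw [le_div_iff₀ hspos]
        nlinarith
      · rw [div_le_one hspos]
        have p1 : Nf w * (w * (E * Nc w)) ≤ Nf w := by nlinarith
        have p2 : Nc t * (w * (E * Nf w)) ≤ Nc w * (w * (E * Nf w)) := by
          apply mul_le_mul_of_nonneg_right hNct_le hwENf
        have p3 : Nc w * (w * (E * Nf w)) = Nf w * (w * (E * Nc w)) := by ring
        linarith
  · -- t < w, indicator = 0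
    have hg : steinSol t w = E * (stdNormalCDF t * Nc w) := by
      rw [steinSol_eq, Fint_right hwt.le]
    have hcdf : stdNormalCDF t = Nf t / s := cdf_eq t
    have hs' : steinSol' t w = (Nf t * (w * (E * Nc w)) - Nf t) / s := by
      rw [steinSol', hg, hcdf, if_neg (not_le.2 hwt)]
      field_simp
      ring
    have hNft : 0 ≤ Nf t := Nf_nonneg t
    have hNft_le : Nf t ≤ Nf w := Nf_mono hwt.le
    rw [hs']
    rcases le_or_gt 0 w with hw0 | hw0
    · -- 0 ≤ w
      have htr : w * (E * Nc w) ≤ 1 := tail_right hw0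
      have hwENc : 0 ≤ w * (E * Nc w) := by positivity
      constructor
      · rw [le_div_iff₀ hspos]
        have h1 : Nf t * (w * (E * Nc w)) ≥ 0 := by positivity
        have h2 : Nf t ≤ s := by linarith [Nf_add_Nc t, Nc_nonneg t]
        nlinarith
      · rw [div_le_one hspos]
        nlinarith
    · -- w < 0
      have htl : -w * (E * Nf w) ≤ 1 := tail_left hw0.le
      have hwENc : w * (E * Nc w) ≤ 0 := by
        apply mul_nonpos_of_nonpos_of_nonneg hw0.le
        positivity
      constructor
      · rw [le_div_iff₀ hspos]
        have q0 : 0 ≤ -(w * (E * Nc w)) := by linarith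
        have q1 : Nf t * -(w * (E * Nc w)) ≤ Nf w * -(w * (E * Nc w)) :=
          mul_le_mul_of_nonneg_right hNft_le q0
        have q2 : Nc w * (-w * (E * Nf w)) ≤ Nc w * 1 :=
          mul_le_mul_of_nonneg_left htl hNc
        have q3 : Nf w * -(w * (E * Nc w)) = Nc w * (-w * (E * Nf w)) := by ring
        nlinarith [q1, q2, q3]
      · rw [div_le_one hspos]
        nlinarith

lemma Fint_eq_primitive (t : ℝ) :
    Fint t = fun w => Fint t 0 + ∫ x in (0:ℝ)..w, ff t x := by
  funext w
  have := intervalIntegral.integral_Iic_sub_Iic (integrable_ff t).integrableOn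
    (integrable_ff t).integrableOn (a := (0:ℝ)) (b := w)
  unfold Fint
  linarith [this]

lemma continuous_Fint (t : ℝ) : Continuous (Fint t) := by
  rw [Fint_eq_primitive]
  exact continuous_const.add ((integrable_ff t).continuous_primitive 0)

lemma continuous_steinSol (t : ℝ) : Continuous (steinSol t) := by
  have : steinSol t = fun w => Real.exp (w ^ 2 / 2) * Fint t w := rfl
  rw [this]
  exact (Real.continuous_exp.comp (by fun_prop)).mul (continuous_Fint t)

lemma hasDerivAt_exp_sq (w : ℝ) :
    HasDerivAt (fun y : ℝ => Real.exp (y ^ 2 / 2)) (w * Real.exp (w ^ 2 / 2)) w := by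
  have h1 : HasDerivAt (fun y : ℝ => y ^ 2 / 2) w w := by
    have := (hasDerivAt_pow 2 w).div_const 2
    exact this.congr_deriv (by ring)
  have := h1.exp
  exact this.congr_deriv (by ring)

lemma hasDerivAt_steinSol {t w : ℝ} (hwt : w ≠ t) :
    HasDerivAt (steinSol t) (steinSol' t w) w := by
  have hcont : ContinuousAt (ff t) w := by
    rcases lt_or_gt_of_ne hwt with hlt | hgt
    · have hev : ∀ᶠ x in nhds w, ff t x = (1 - stdNormalCDF t) * gph x := by
        filter_upwards [Iio_mem_nhds hlt] with x hx
        have hx' : x ≤ t := le_of_lt hx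
        simp [ff, hx']
      exact ContinuousAt.congr ((continuous_const.mul continuous_gph).continuousAt)
        (Filter.EventuallyEq.symm hev)
    · have hev : ∀ᶠ x in nhds w, ff t x = (0 - stdNormalCDF t) * gph x := by
        filter_upwards [Ioi_mem_nhds hgt] with x hx
        simp only [Set.mem_Ioi] at hx
        simp [ff, not_le.2 hx]
      exact ContinuousAt.congr ((continuous_const.mul continuous_gph).continuousAt)
        (Filter.EventuallyEq.symm hev)
  have hF : HasDerivAt (Fint t) (ff t w) w := by
    rw [Fint_eq_primitive]
    apply HasDerivAt.const_add
    exact intervalIntegral.integral_hasDerivAt_right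
      ((integrable_ff t).intervalIntegrable)
      ((integrable_ff t).aestronglyMeasurable.stronglyMeasurableAtFilter)
      hcont
  have hprod := (hasDerivAt_exp_sq w).mul hF
  have heq : steinSol t = fun y => Real.exp (y ^ 2 / 2) * Fint t y := rfl
  rw [heq]
  have h1 : Real.exp (w ^ 2 / 2) * gph w = 1 := exp_mul_gph w
  have h2 : Real.exp (w ^ 2 / 2) * ff t w
      = (if w ≤ t then (1:ℝ) else 0) - stdNormalCDF t := by
    unfold ff
    calc Real.exp (w ^ 2 / 2) * (((if w ≤ t then (1:ℝ) else 0) - stdNormalCDF t) * gph w)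
        = ((if w ≤ t then (1:ℝ) else 0) - stdNormalCDF t) * (Real.exp (w ^ 2 / 2) * gph w) := by
          ring
      _ = _ := by rw [h1, mul_one]
  refine hprod.congr_deriv ?_
  rw [steinSol', steinSol_eq, h2]
  ring

lemma intervalIntegrable_steinSol' (t a b : ℝ) :
    IntervalIntegrable (steinSol' t) volume a b := by
  have h1 : IntervalIntegrable (fun w => w * steinSol t w - stdNormalCDF t) volume a b := by
    apply Continuous.intervalIntegrable
    exact (continuous_id.mul (continuous_steinSol t)).sub continuous_const
  have h2 : IntervalIntegrable (fun w => if w ≤ t then (1:ℝ) else 0) volume a b := by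
    rw [intervalIntegrable_iff]
    apply Integrable.mono' (g := fun _ => (1:ℝ))
      (integrableOn_const (C := (1:ℝ)) measure_Ioc_lt_top.ne)
    · exact (measurable_ind t).aestronglyMeasurable.restrict
    · filter_upwards with x
      by_cases hx : x ≤ t <;> simp [hx]
  have := h1.add h2
  apply this.congr
  intro x _
  simp only [steinSol']
  ring

lemma ftc_aux {t a b : ℝ} (hab : a ≤ b) (hside : b ≤ t ∨ t ≤ a) :
    ∫ u in a..b, steinSol' t u = steinSol t b - steinSol t a := by
  apply intervalIntegral.integral_eq_sub_of_hasDerivAt_of_le hab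
    ((continuous_steinSol t).continuousOn)
    (fun x hx => ?_) (intervalIntegrable_steinSol' t a b)
  apply hasDerivAt_steinSol
  rcases hside with h | h
  · exact ne_of_lt (lt_of_lt_of_le hx.2 h)
  · exact ne_of_gt (lt_of_le_of_lt h hx.1)

lemma ftc {t a b : ℝ} (hab : a ≤ b) :
    ∫ u in a..b, steinSol' t u = steinSol t b - steinSol t a := by
  rcases le_total b t with h | h
  · exact ftc_aux hab (Or.inl h)
  rcases le_total t a with h' | h'
  · exact ftc_aux hab (Or.inr h')
  · -- a ≤ t ≤ b
    rw [← intervalIntegral.integral_add_adjacent_intervals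
      (intervalIntegrable_steinSol' t a t) (intervalIntegrable_steinSol' t t b),
      ftc_aux h' (Or.inl le_rfl), ftc_aux h (Or.inr le_rfl)]
    ring

lemma steinSol_lipschitz (t p q : ℝ) : |steinSol t p - steinSol t q| ≤ |p - q| := by
  wlog hpq : q ≤ p generalizing p q
  · rw [abs_sub_comm, abs_sub_comm p q]
    exact this q p (by linarith)
  rw [← ftc (t := t) hpq]
  have := intervalIntegral.norm_integral_le_of_norm_le_const (C := 1)
    (f := steinSol' t) (a := q) (b := p) (fun x _ => by
      rw [Real.norm_eq_abs]; exact abs_steinSol'_le t x)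
  rw [Real.norm_eq_abs] at this
  calc |∫ x in q..p, steinSol' t x| ≤ 1 * |p - q| := by
        exact this
    _ = |p - q| := by rw [one_mul]

lemma ptwise (t w u : ℝ) {κ : ℝ}
    (hκ : |(if u ≤ t then (1:ℝ) else 0) - (if w ≤ t then (1:ℝ) else 0)| ≤ κ) :
    |steinSol' t u - steinSol' t w|
      ≤ |u - w| * (|w| + Real.sqrt (2 * Real.pi) / 4) + κ := by
  have hdecomp : steinSol' t u - steinSol' t w
      = ((u - w) * steinSol t u + w * (steinSol t u - steinSol t w))
        + ((if u ≤ t then (1:ℝ) else 0) - (if w ≤ t then (1:ℝ) else 0)) := by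
    unfold steinSol'
    ring
  rw [hdecomp]
  have h1 : |(u - w) * steinSol t u| ≤ |u - w| * (Real.sqrt (2 * Real.pi) / 4) := by
    rw [abs_mul]
    apply mul_le_mul_of_nonneg_left _ (abs_nonneg _)
    rw [abs_of_nonneg (steinSol_nonneg t u)]
    exact steinSol_le t u
  have h2 : |w * (steinSol t u - steinSol t w)| ≤ |w| * |u - w| := by
    rw [abs_mul]
    exact mul_le_mul_of_nonneg_left (steinSol_lipschitz t u w) (abs_nonneg _)
  calc |((u - w) * steinSol t u + w * (steinSol t u - steinSol t w))
        + ((if u ≤ t then (1:ℝ) else 0) - (if w ≤ t then (1:ℝ) else 0))|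
      ≤ |(u - w) * steinSol t u + w * (steinSol t u - steinSol t w)|
        + |(if u ≤ t then (1:ℝ) else 0) - (if w ≤ t then (1:ℝ) else 0)| := abs_add_le _ _
    _ ≤ (|(u - w) * steinSol t u| + |w * (steinSol t u - steinSol t w)|) + κ := by
        have := abs_add_le ((u - w) * steinSol t u) (w * (steinSol t u - steinSol t w))
        linarith
    _ ≤ |u - w| * (|w| + Real.sqrt (2 * Real.pi) / 4) + κ := by
        have h3 : |u - w| * (|w| + Real.sqrt (2 * Real.pi) / 4)
            = |u - w| * (Real.sqrt (2 * Real.pi) / 4) + |w| * |u - w| := by ring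
        linarith

lemma bound_integral {a b C κ : ℝ} (hab : a ≤ b) (hC : 0 ≤ C) (v : ℝ)
    (hv : v = a ∨ v = b) :
    ∫ u in a..b, (|u - v| * C + κ) = (b - a) ^ 2 / 2 * C + κ * (b - a) := by
  have hint1 : ∀ c : ℝ, IntervalIntegrable (fun u => |u - c| * C) volume a b :=
    fun c => (((continuous_id.sub continuous_const).abs).mul continuous_const).intervalIntegrable _ _
  rw [intervalIntegral.integral_add (hint1 v) intervalIntegrable_const]
  rw [intervalIntegral.integral_const, smul_eq_mul]
  have habs : ∫ u in a..b, |u - v| * C = (b - a) ^ 2 / 2 * C := by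
    rcases hv with rfl | rfl
    · have h4 : ∀ u ∈ Set.uIcc v b, |u - v| * C = (u - v) * C := by
        intro u hu
        rw [Set.uIcc_of_le hab] at hu
        rw [abs_of_nonneg (by linarith [hu.1])]
      rw [intervalIntegral.integral_congr h4, intervalIntegral.integral_mul_const]
      have h5 : ∫ u in v..b, (u - v) = (b - v) ^ 2 / 2 := by
        rw [intervalIntegral.integral_sub (Continuous.intervalIntegrable (by fun_prop) _ _)
          intervalIntegrable_const, integral_id, intervalIntegral.integral_const, smul_eq_mul]
        ring
      rw [h5]
    · have h4 : ∀ u ∈ Set.uIcc a v, |u - v| * C = (v - u) * C := by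
        intro u hu
        rw [Set.uIcc_of_le hab] at hu
        rw [abs_of_nonpos (by linarith [hu.2]), neg_sub]
      rw [intervalIntegral.integral_congr h4, intervalIntegral.integral_mul_const]
      have h5 : ∫ u in a..v, (v - u) = (v - a) ^ 2 / 2 := by
        rw [intervalIntegral.integral_sub intervalIntegrable_const
          (Continuous.intervalIntegrable (by fun_prop) _ _), integral_id,
          intervalIntegral.integral_const, smul_eq_mul]
        ring
      rw [h5]
  rw [habs]
  ring

/-- the approximate Taylor expansion for the Stein solution. For all
`w, h ∈ ℝ`:
`|g_t(w+h) - g_t(w) - g'_t(w) h| ≤ (h²/2)(|w| + √(2π)/4) + |h| (1_{[w,w+h)}(t) + 1_{[w+h,w)}(t))`. -/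
theorem stein_approximate_taylor (t w h : ℝ) :
    |steinSol t (w + h) - steinSol t w - steinSol' t w * h| ≤
      h ^ 2 / 2 * (|w| + Real.sqrt (2 * Real.pi) / 4) +
        |h| * ((if w ≤ t ∧ t < w + h then (1 : ℝ) else 0) +
               (if w + h ≤ t ∧ t < w then (1 : ℝ) else 0)) := by
  set C := |w| + Real.sqrt (2 * Real.pi) / 4 with hC
  have hC0 : 0 ≤ C := by positivity
  set κ₁ := (if w ≤ t ∧ t < w + h then (1:ℝ) else 0) with hκ₁
  set κ₂ := (if w + h ≤ t ∧ t < w then (1:ℝ) else 0) with hκ₂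
  have hκ₁0 : 0 ≤ κ₁ := by rw [hκ₁]; split <;> norm_num
  have hκ₂0 : 0 ≤ κ₂ := by rw [hκ₂]; split <;> norm_num
  rcases le_or_gt 0 h with hh | hh
  · -- 0 ≤ h
    have hab : w ≤ w + h := by linarith
    have hE : steinSol t (w + h) - steinSol t w - steinSol' t w * h
        = ∫ u in w..(w + h), (steinSol' t u - steinSol' t w) := by
      rw [intervalIntegral.integral_sub (intervalIntegrable_steinSol' t _ _)
        intervalIntegrable_const, ftc hab, intervalIntegral.integral_const, smul_eq_mul]
      ring
    have hptw : ∀ᵐ u ∂(volume.restrict (Set.uIoc w (w + h))),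
        ‖steinSol' t u - steinSol' t w‖ ≤ |u - w| * C + κ₁ := by
      apply Filter.eventually_of_mem (self_mem_ae_restrict measurableSet_uIoc)
      intro u hu
      rw [Set.uIoc_of_le hab] at hu
      rw [Real.norm_eq_abs]
      apply ptwise
      by_cases h1 : w ≤ t ∧ t < w + h
      · rw [hκ₁, if_pos h1]
        have e1 : ∀ p q : ℝ, (p = 0 ∨ p = 1) → (q = 0 ∨ q = 1) → |p - q| ≤ 1 := by
          intro p q hp hq
          rcases hp with rfl | rfl <;> rcases hq with rfl | rfl <;> norm_num
        apply e1 <;> [skip; skip] <;> split <;> simp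
      · rw [hκ₁, if_neg h1]
        push_neg at h1
        by_cases hwt : w ≤ t
        · have ht : w + h ≤ t := h1 hwt
          have hut : u ≤ t := le_trans hu.2 ht
          simp [hut, hwt]
        · have hut : ¬ u ≤ t := by
            push_neg at hwt ⊢
            exact lt_trans hwt hu.1
          simp [hut, hwt]
    have hbound := intervalIntegral.norm_integral_le_abs_of_norm_le hptw
      (((((continuous_id.sub continuous_const).abs).mul continuous_const).add
        continuous_const).intervalIntegrable _ _)
    rw [bound_integral hab hC0 w (Or.inl rfl)] at hbound
    rw [hE]
    rw [Real.norm_eq_abs] at hbound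
    have hval : (w + h - w) ^ 2 / 2 * C + κ₁ * (w + h - w) = h ^ 2 / 2 * C + κ₁ * h := by
      ring_nf
    rw [hval] at hbound
    have habs : |h ^ 2 / 2 * C + κ₁ * h| = h ^ 2 / 2 * C + κ₁ * h := by
      apply abs_of_nonneg
      have := mul_nonneg hκ₁0 hh
      positivity
    rw [habs] at hbound
    have hha : |h| = h := abs_of_nonneg hh
    have h2 : 0 ≤ h * κ₂ := mul_nonneg hh hκ₂0
    calc |∫ u in w..(w + h), (steinSol' t u - steinSol' t w)| ≤ h ^ 2 / 2 * C + κ₁ * h :=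
          hbound
      _ ≤ h ^ 2 / 2 * C + |h| * (κ₁ + κ₂) := by rw [hha]; nlinarith
  · -- h < 0
    have hab : w + h ≤ w := by linarith
    have hE : steinSol t (w + h) - steinSol t w - steinSol' t w * h
        = -∫ u in (w + h)..w, (steinSol' t u - steinSol' t w) := by
      rw [intervalIntegral.integral_sub (intervalIntegrable_steinSol' t _ _)
        intervalIntegrable_const, ftc hab, intervalIntegral.integral_const, smul_eq_mul]
      ring
    have hptw : ∀ᵐ u ∂(volume.restrict (Set.uIoc (w + h) w)),
        ‖steinSol' t u - steinSol' t w‖ ≤ |u - w| * C + κ₂ := by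
      apply Filter.eventually_of_mem (self_mem_ae_restrict measurableSet_uIoc)
      intro u hu
      rw [Set.uIoc_of_le hab] at hu
      rw [Real.norm_eq_abs]
      apply ptwise
      by_cases h1 : w + h ≤ t ∧ t < w
      · rw [hκ₂, if_pos h1]
        have e1 : ∀ p q : ℝ, (p = 0 ∨ p = 1) → (q = 0 ∨ q = 1) → |p - q| ≤ 1 := by
          intro p q hp hq
          rcases hp with rfl | rfl <;> rcases hq with rfl | rfl <;> norm_num
        apply e1 <;> [skip; skip] <;> split <;> simp
      · rw [hκ₂, if_neg h1]
        push_neg at h1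
        by_cases hwht : w + h ≤ t
        · have ht : w ≤ t := h1 hwht
          have hut : u ≤ t := le_trans hu.2 ht
          simp [hut, ht]
        · have hwt : ¬ w ≤ t := by
            push_neg at hwht ⊢
            linarith
          have hut : ¬ u ≤ t := by
            push_neg at hwht ⊢
            linarith [hu.1]
          simp [hut, hwt]
    have hbound := intervalIntegral.norm_integral_le_abs_of_norm_le hptw
      (((((continuous_id.sub continuous_const).abs).mul continuous_const).add
        continuous_const).intervalIntegrable _ _)
    rw [bound_integral hab hC0 w (Or.inr rfl)] at hbound
    rw [hE, abs_neg]
    rw [Real.norm_eq_abs] at hbound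
    have hval : (w - (w + h)) ^ 2 / 2 * C + κ₂ * (w - (w + h))
        = h ^ 2 / 2 * C + κ₂ * (-h) := by ring_nf
    rw [hval] at hbound
    have habs : |h ^ 2 / 2 * C + κ₂ * (-h)| = h ^ 2 / 2 * C + κ₂ * (-h) := by
      apply abs_of_nonneg
      have := mul_nonneg hκ₂0 (by linarith : (0:ℝ) ≤ -h)
      positivity
    rw [habs] at hbound
    have hha : |h| = -h := abs_of_neg hh
    have h2 : 0 ≤ (-h) * κ₁ := mul_nonneg (by linarith) hκ₁0
    calc |∫ u in (w + h)..w, (steinSol' t u - steinSol' t w)|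
        ≤ h ^ 2 / 2 * C + κ₂ * (-h) := hbound
      _ ≤ h ^ 2 / 2 * C + |h| * (κ₁ + κ₂) := by rw [hha]; nlinarith
end

section
/- Fix ε' > 0 and let ρ_n := log(n)^{1/d + ε'}. Define the event Ω_n(X) := { max_{1 ≤ j ≤ n} R(X_j;X) ≤ n^{−1/d} · ρ_n }. Then for every η > 0, n^η · P(Ω_n(X)^c) → 0 as n → ∞. -/
open MeasureTheory ProbabilityTheory

/-- The unit cube `[0,1]^d`. -/
def unitCube (d : ℕ) : Set (EuclideanSpace ℝ (Fin d)) :=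
  {x | ∀ i, x i ∈ Set.Icc (0 : ℝ) 1}

/-- The Voronoi cell `V(x;Z)` with nucleus `x` among the points `Z` (together with `x`). -/
def vorCell {d n : ℕ} (Z : Fin n → EuclideanSpace ℝ (Fin d))
    (x : EuclideanSpace ℝ (Fin d)) : Set (EuclideanSpace ℝ (Fin d)) :=
  {y ∈ unitCube d | ∀ j, dist y x ≤ dist y (Z j)}

/-- `R(x;Z)`: the circumscribed radius of the Voronoi cell of `x`. -/
noncomputable def circR {d n : ℕ} (Z : Fin n → EuclideanSpace ℝ (Fin d))
    (x : EuclideanSpace ℝ (Fin d)) : ℝ :=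
  sSup {r | ∃ y ∈ vorCell Z x, r = dist y x}

def box (d m : ℕ) (k : Fin d → ℕ) : Set (EuclideanSpace ℝ (Fin d)) :=
  {y | ∀ i, y i ∈ Set.Icc ((k i : ℝ) / m) (((k i : ℝ) + 1) / m)}



lemma box_eq (d m : ℕ) (k : Fin d → ℕ) :
    box d m k = (MeasurableEquiv.toLp 2 (Fin d → ℝ)).symm ⁻¹'
      (Set.univ.pi fun i => Set.Icc ((k i : ℝ) / m) (((k i : ℝ) + 1) / m)) := by
  ext y
  simp only [box, Set.mem_preimage, Set.mem_pi, Set.mem_univ, forall_true_left, Set.mem_Icc,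
    Set.mem_setOf_eq]
  rfl

lemma measurableSet_box (d m : ℕ) (k : Fin d → ℕ) : MeasurableSet (box d m k) := by
  rw [box_eq]
  exact (MeasurableSet.univ_pi fun i => measurableSet_Icc).preimage
    (MeasurableEquiv.measurable _)

lemma volume_box (d m : ℕ) (hm : 0 < m) (k : Fin d → ℕ) :
    volume (box d m k) = ENNReal.ofReal ((1 : ℝ) / m) ^ d := by
  rw [box_eq, (EuclideanSpace.volume_preserving_symm_measurableEquiv_toLp (Fin d)).measure_preimage
    ((MeasurableSet.univ_pi fun i => measurableSet_Icc).nullMeasurableSet)]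
  rw [volume_pi_pi]
  have : ∀ i : Fin d, volume (Set.Icc ((k i : ℝ) / m) (((k i : ℝ) + 1) / m))
      = ENNReal.ofReal ((1 : ℝ) / m) := by
    intro i
    rw [Real.volume_Icc]
    congr 1
    field_simp
    ring
  simp [this, Finset.prod_const]

lemma unitCube_eq (d : ℕ) :
    unitCube d = (MeasurableEquiv.toLp 2 (Fin d → ℝ)).symm ⁻¹'
      (Set.univ.pi fun _ => Set.Icc (0 : ℝ) 1) := by
  ext y
  simp only [unitCube, Set.mem_preimage, Set.mem_pi, Set.mem_univ, forall_true_left,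
    Set.mem_Icc, Set.mem_setOf_eq]
  rfl

lemma measurableSet_unitCube (d : ℕ) : MeasurableSet (unitCube d) := by
  rw [unitCube_eq]
  exact (MeasurableSet.univ_pi fun i => measurableSet_Icc).preimage
    (MeasurableEquiv.measurable _)

lemma volume_unitCube (d : ℕ) : volume (unitCube d) = 1 := by
  rw [unitCube_eq, (EuclideanSpace.volume_preserving_symm_measurableEquiv_toLp (Fin d)).measure_preimage
    ((MeasurableSet.univ_pi fun i => measurableSet_Icc).nullMeasurableSet), volume_pi_pi]
  simp

lemma box_subset_unitCube {d m : ℕ} (hm : 0 < m) {k : Fin d → ℕ} (hk : ∀ i, k i < m) :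
    box d m k ⊆ unitCube d := by
  intro y hy i
  have h := hy i
  have hm' : (0 : ℝ) < m := by exact_mod_cast hm
  constructor
  · exact le_trans (by positivity) h.1
  · refine le_trans h.2 ?_
    rw [div_le_one hm']
    have : (k i : ℝ) + 1 ≤ m := by exact_mod_cast hk i
    linarith

/-- If `y` is in the unit cube, it lies in some box. -/
lemma exists_box_mem {d m : ℕ} (hm : 0 < m) {y : EuclideanSpace ℝ (Fin d)}
    (hy : y ∈ unitCube d) : ∃ k : Fin d → ℕ, (∀ i, k i < m) ∧ y ∈ box d m k := by
  classical
  refine ⟨fun i => min ⌊y i * m⌋₊ (m - 1), fun i => ?_, fun i => ?_⟩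
  · exact lt_of_le_of_lt (min_le_right _ _) (Nat.sub_lt hm one_pos)
  · have hm' : (0 : ℝ) < m := by exact_mod_cast hm
    have hy0 : 0 ≤ y i := (hy i).1
    have hy1 : y i ≤ 1 := (hy i).2
    simp only [Set.mem_Icc]
    constructor
    · rw [div_le_iff₀ hm']
      have h1 : ((min ⌊y i * m⌋₊ (m - 1) : ℕ) : ℝ) ≤ (⌊y i * m⌋₊ : ℝ) := by
        exact_mod_cast min_le_left _ _
      exact h1.trans (Nat.floor_le (by positivity))
    · rw [le_div_iff₀ hm']
      rcases le_or_gt ⌊y i * m⌋₊ (m - 1) with h | h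
      · rw [min_eq_left h]
        exact (Nat.lt_floor_add_one (y i * m)).le
      · rw [min_eq_right h.le]
        have hcast : ((m - 1 : ℕ) : ℝ) = (m : ℝ) - 1 := by
          have h1 : (1 : ℕ) ≤ m := hm
          push_cast [Nat.cast_sub h1]
          ring
        rw [hcast]
        nlinarith

/-- Points in the same box are within `√d / m` of each other. -/
lemma dist_le_of_mem_box {d m : ℕ} (hm : 0 < m) {k : Fin d → ℕ}
    {y z : EuclideanSpace ℝ (Fin d)} (hy : y ∈ box d m k) (hz : z ∈ box d m k) :
    dist y z ≤ Real.sqrt d / m := by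
  have hm' : (0 : ℝ) < m := by exact_mod_cast hm
  rw [EuclideanSpace.dist_eq]
  have hbound : ∀ i, dist (y i) (z i) ^ 2 ≤ (1 / (m : ℝ)) ^ 2 := by
    intro i
    have h1 := hy i; have h2 := hz i
    simp only [Set.mem_Icc] at h1 h2
    have habs : |y i - z i| ≤ 1 / (m : ℝ) := by
      rw [abs_le]
      have hlen : ((k i : ℝ) + 1) / m - (k i : ℝ) / m = 1 / m := by field_simp; ring
      constructor <;> linarith
    rw [Real.dist_eq]
    exact pow_le_pow_left₀ (abs_nonneg _) habs 2
  calc Real.sqrt (∑ i, dist (y i) (z i) ^ 2)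
      ≤ Real.sqrt (∑ _i : Fin d, (1 / (m : ℝ)) ^ 2) :=
        Real.sqrt_le_sqrt (Finset.sum_le_sum fun i _ => hbound i)
    _ = Real.sqrt (d * (1 / (m : ℝ)) ^ 2) := by rw [Finset.sum_const]; simp [nsmul_eq_mul]
    _ = Real.sqrt d * (1 / m) := by
        rw [Real.sqrt_mul (by positivity), Real.sqrt_sq (by positivity)]
    _ = Real.sqrt d / m := by ring

/-- Geometry: if every box contains a sample point then all circumscribed radii are small. -/
lemma circR_le_of_boxes_full {d n m : ℕ} (hm : 0 < m) {Z : Fin n → EuclideanSpace ℝ (Fin d)}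
    (h : ∀ k : Fin d → ℕ, (∀ i, k i < m) → ∃ j, Z j ∈ box d m k)
    (x : EuclideanSpace ℝ (Fin d)) : circR Z x ≤ Real.sqrt d / m := by
  apply Real.sSup_le
  · rintro r ⟨y, ⟨hyc, hyv⟩, rfl⟩
    obtain ⟨k, hk, hyk⟩ := exists_box_mem hm hyc
    obtain ⟨j, hj⟩ := h k hk
    exact (hyv j).trans (dist_le_of_mem_box hm hyk hj)
  · positivity

open ProbabilityTheory

lemma prob_no_point_in_box {d n : ℕ} {Ω : Type} [MeasurableSpace Ω] (P : Measure Ω)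
    [IsProbabilityMeasure P] (X : Ω → Fin n → EuclideanSpace ℝ (Fin d))
    (hmeas : ∀ i, Measurable fun ω => X ω i)
    (hindep : iIndepFun (fun i ω => X ω i) P)
    (hunif : ∀ i, Measure.map (fun ω => X ω i) P = volume.restrict (unitCube d))
    {m : ℕ} (hm : 0 < m) {k : Fin d → ℕ} (hk : ∀ i, k i < m) :
    P (⋂ j, (fun ω => X ω j) ⁻¹' (box d m k)ᶜ)
      = ENNReal.ofReal ((1 - ((1 : ℝ) / m) ^ d) ^ n) := by
  have hbox := measurableSet_box d m k
  have hml : ((1 : ℝ) / m) ^ d ≤ 1 := by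
    apply pow_le_one₀ (by positivity)
    rw [div_le_one (by exact_mod_cast hm)]
    exact_mod_cast hm
  have h1 : ∀ j : Fin n, P ((fun ω => X ω j) ⁻¹' (box d m k)ᶜ)
      = ENNReal.ofReal (1 - ((1 : ℝ) / m) ^ d) := by
    intro j
    rw [← Measure.map_apply (hmeas j) hbox.compl, hunif j,
      Measure.restrict_apply hbox.compl]
    have hset : (box d m k)ᶜ ∩ unitCube d = unitCube d \ box d m k := by
      ext y; simp [Set.mem_diff, and_comm]
    rw [hset, measure_diff (box_subset_unitCube hm hk) hbox.nullMeasurableSet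
      ((lt_of_le_of_lt (measure_mono (box_subset_unitCube hm hk))
      (by rw [volume_unitCube]; exact ENNReal.one_lt_top)).ne), volume_unitCube, volume_box d m hm k]
    rw [← ENNReal.ofReal_pow (by positivity), ← ENNReal.ofReal_one,
      ← ENNReal.ofReal_sub _ (by positivity)]
  have hcomap : ∀ j : Fin n, MeasurableSet[MeasurableSpace.comap (fun ω => X ω j)
      inferInstance] ((fun ω => X ω j) ⁻¹' (box d m k)ᶜ) :=
    fun j => ⟨(box d m k)ᶜ, hbox.compl, rfl⟩
  rw [hindep.meas_iInter hcomap]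
  simp only [h1, Finset.prod_const, Finset.card_univ, Fintype.card_fin]
  rw [ENNReal.ofReal_pow (by linarith)]

lemma event_bound {d n : ℕ} {Ω : Type} [MeasurableSpace Ω] (P : Measure Ω)
    [IsProbabilityMeasure P] (X : Ω → Fin n → EuclideanSpace ℝ (Fin d))
    (hmeas : ∀ i, Measurable fun ω => X ω i)
    (hindep : iIndepFun (fun i ω => X ω i) P)
    (hunif : ∀ i, Measure.map (fun ω => X ω i) P = volume.restrict (unitCube d))
    {m : ℕ} (hm : 0 < m) {R : ℝ} (hR : Real.sqrt d / m ≤ R) :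
    P {ω | ¬ ∀ j, circR (X ω) (X ω j) ≤ R}
      ≤ (m ^ d : ℕ) * ENNReal.ofReal ((1 - ((1 : ℝ) / m) ^ d) ^ n) := by
  classical
  have hsub : {ω | ¬ ∀ j, circR (X ω) (X ω j) ≤ R}
      ⊆ ⋃ κ : Fin d → Fin m, ⋂ j, (fun ω => X ω j) ⁻¹' (box d m (fun i => (κ i : ℕ)))ᶜ := by
    intro ω hω
    by_contra hc
    simp only [Set.mem_iUnion, Set.mem_iInter, Set.mem_preimage, Set.mem_compl_iff,
      not_exists, not_forall, not_not] at hc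
    apply hω
    intro j
    refine le_trans (circR_le_of_boxes_full hm ?_ _) hR
    intro k hk
    obtain ⟨j', hj'⟩ := hc (fun i => ⟨k i, hk i⟩)
    exact ⟨j', hj'⟩
  refine le_trans (measure_mono hsub) (le_trans (measure_iUnion_le _) ?_)
  have hterm : ∀ κ : Fin d → Fin m,
      P (⋂ j, (fun ω => X ω j) ⁻¹' (box d m (fun i => (κ i : ℕ)))ᶜ)
        = ENNReal.ofReal ((1 - ((1 : ℝ) / m) ^ d) ^ n) :=
    fun κ => prob_no_point_in_box P X hmeas hindep hunif hm (fun i => (κ i).2)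
  rw [tsum_fintype]
  simp only [hterm, Finset.sum_const, Finset.card_univ, nsmul_eq_mul]
  apply le_of_eq
  congr 1
  rw [Fintype.card_fun]
  simp

set_option maxHeartbeats 1000000 in
/-- with `ρ_n = log(n)^{1/d+ε'}` and
`Ω_n(X) = {max_{1≤j≤n} R(X_j;X) ≤ n^{-1/d} ρ_n}`, one has `n^η P(Ω_n(X)ᶜ) → 0` for every
`η > 0`. -/
theorem voronoi_max_radius_bound (d : ℕ) (hd : 0 < d) (ε' : ℝ) (hε' : 0 < ε')
    (Ω : ℕ → Type) (mΩ : ∀ n, MeasurableSpace (Ω n)) (P : ∀ n, Measure (Ω n))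
    (hP : ∀ n, IsProbabilityMeasure (P n))
    (X : ∀ n, Ω n → Fin n → EuclideanSpace ℝ (Fin d))
    (hmeas : ∀ n i, Measurable fun ω => X n ω i)
    (hindep : ∀ n, iIndepFun (fun i ω => X n ω i) (P n))
    (hunif : ∀ n i, Measure.map (fun ω => X n ω i) (P n) = volume.restrict (unitCube d))
    (η : ℝ) (hη : 0 < η) :
    Filter.Tendsto
      (fun n : ℕ => (n : ℝ) ^ η *
        ((P n) {ω | ¬ ∀ j, circR (X n ω) (X n ω j) ≤
          (n : ℝ) ^ (-(1 : ℝ) / d) * Real.log n ^ (1 / (d : ℝ) + ε')}).toReal)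
      Filter.atTop (nhds 0) := by
  have hd' : (0 : ℝ) < d := by exact_mod_cast hd
  set δ : ℝ := d * ε' with hδdef
  have hδ : 0 < δ := by positivity
  set c : ℝ := (2 * Real.sqrt d) ^ d with hcdef
  have hsd : 1 ≤ Real.sqrt d := Real.one_le_sqrt.mpr (by exact_mod_cast hd)
  have hc1 : 1 ≤ c := one_le_pow₀ (by linarith)
  have hc0 : 0 < c := by linarith
  -- eventual hypotheses
  have h3 : ∀ᶠ n : ℕ in Filter.atTop, 3 ≤ n := Filter.eventually_ge_atTop 3
  have hlog1 : ∀ᶠ n : ℕ in Filter.atTop, 1 ≤ Real.log n := by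
    filter_upwards [h3] with n hn
    have hn' : (3 : ℝ) ≤ (n : ℝ) := by exact_mod_cast hn
    rw [Real.le_log_iff_exp_le (by linarith)]
    calc Real.exp 1 ≤ 2.7182818286 := Real.exp_one_lt_d9.le
      _ ≤ (n : ℝ) := by linarith
  have h2 : ∀ᶠ n : ℕ in Filter.atTop, Real.log n ^ (1 + δ) ≤ (n : ℝ) := by
    have hlo := isLittleO_log_rpow_rpow_atTop (1 + δ) one_pos
    have hb := hlo.bound one_pos
    have := tendsto_natCast_atTop_atTop (R := ℝ)
    filter_upwards [this.eventually hb, this.eventually (Filter.eventually_ge_atTop (1 : ℝ)),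
      hlog1] with n hn hn1 hL
    have h0 : (0 : ℝ) ≤ Real.log n ^ (1 + δ) := Real.rpow_nonneg (by linarith) _
    have : ‖Real.log n ^ (1 + δ)‖ ≤ 1 * ‖(n : ℝ) ^ (1 : ℝ)‖ := hn
    rwa [Real.rpow_one, one_mul, Real.norm_of_nonneg h0,
      Real.norm_of_nonneg (by linarith)] at this
  have h4 : ∀ᶠ n : ℕ in Filter.atTop, 2 * c * (η + 2) ≤ Real.log n ^ δ := by
    have : Filter.Tendsto (fun n : ℕ => Real.log n ^ δ) Filter.atTop Filter.atTop :=
      (tendsto_rpow_atTop hδ).comp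
        (Real.tendsto_log_atTop.comp (tendsto_natCast_atTop_atTop))
    exact this.eventually_ge_atTop _
  -- the key bound
  have key : ∀ᶠ n : ℕ in Filter.atTop,
      (n : ℝ) ^ η * ((P n) {ω | ¬ ∀ j, circR (X n ω) (X n ω j) ≤
          (n : ℝ) ^ (-(1 : ℝ) / d) * Real.log n ^ (1 / (d : ℝ) + ε')}).toReal
        ≤ c * (n : ℝ)⁻¹ := by
    filter_upwards [h3, hlog1, h2, h4] with n hn3 hL1 hLn hLδ
    have := hP n
    set L : ℝ := Real.log n with hLdef
    have hL0 : (0 : ℝ) < L := by linarith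
    have hn0 : (0 : ℝ) < n := by exact_mod_cast Nat.lt_of_lt_of_le (by norm_num) hn3
    have hn1 : (1 : ℝ) ≤ n := by
      have : (1 : ℕ) ≤ n := by omega
      exact_mod_cast this
    set ρ : ℝ := L ^ (1 / (d : ℝ) + ε') with hρdef
    set r : ℝ := (n : ℝ) ^ (-(1 : ℝ) / d) * ρ with hrdef
    have hρ0 : 0 < ρ := Real.rpow_pos_of_pos hL0 _
    have hr0 : 0 < r := mul_pos (Real.rpow_pos_of_pos hn0 _) hρ0
    have hrd : r ^ d = (n : ℝ)⁻¹ * L ^ (1 + δ) := by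
      rw [hrdef, mul_pow, hρdef, ← Real.rpow_natCast ((n : ℝ) ^ (-(1 : ℝ) / d)) d,
        ← Real.rpow_natCast (L ^ (1 / (d : ℝ) + ε')) d, ← Real.rpow_mul hn0.le,
        ← Real.rpow_mul hL0.le]
      have e1 : (-(1 : ℝ) / d) * (d : ℝ) = -1 := by field_simp
      have e2 : (1 / (d : ℝ) + ε') * (d : ℝ) = 1 + δ := by field_simp; ring
      rw [e1, e2, Real.rpow_neg_one]
    have hrd1 : r ^ d ≤ 1 := by
      rw [hrd]
      have h' : (n : ℝ)⁻¹ * L ^ (1 + δ) ≤ (n : ℝ)⁻¹ * n := by gcongr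
      simpa [inv_mul_cancel₀ hn0.ne'] using h'
    have hr1 : r ≤ 1 := (pow_le_one_iff_of_nonneg hr0.le hd.ne').mp hrd1
    clear_value ρ r
    set m : ℕ := ⌈Real.sqrt d / r⌉₊ with hmdef
    have hdr1 : 1 ≤ Real.sqrt d / r := (one_le_div hr0).mpr (hr1.trans hsd)
    have hm0 : 0 < m := Nat.ceil_pos.mpr (by linarith)
    have hm0' : (0 : ℝ) < m := by exact_mod_cast hm0
    have hmge : Real.sqrt d / r ≤ (m : ℝ) := Nat.le_ceil _
    clear_value m
    have hRle : Real.sqrt d / (m : ℝ) ≤ r := by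
      rw [div_le_iff₀ hm0']
      calc Real.sqrt d ≤ (m : ℝ) * r := (div_le_iff₀ hr0).mp hmge
        _ = r * m := mul_comm _ _
    have hmle : (m : ℝ) ≤ 2 * Real.sqrt d / r := by
      have h1 : (m : ℝ) < Real.sqrt d / r + 1 := by
        rw [hmdef]
        exact Nat.ceil_lt_add_one (by positivity)
      have h2 : 2 * Real.sqrt d / r = Real.sqrt d / r + Real.sqrt d / r := by ring
      linarith
    have hPb := event_bound (P n) (X n) (hmeas n) (hindep n) (hunif n) hm0 hRle
    have hq0 : (0 : ℝ) ≤ 1 - (1 / (m : ℝ)) ^ d := by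
      have h' : (1 / (m : ℝ)) ^ d ≤ 1 := by
        apply pow_le_one₀ (by positivity)
        rw [div_le_one hm0']
        exact_mod_cast hm0
      linarith
    have htoReal : ((P n) {ω | ¬ ∀ j, circR (X n ω) (X n ω j) ≤ r}).toReal
        ≤ (m : ℝ) ^ d * (1 - (1 / (m : ℝ)) ^ d) ^ n := by
      have hne : (↑(m ^ d) : ENNReal) * ENNReal.ofReal ((1 - ((1 : ℝ) / m) ^ d) ^ n) ≠ ⊤ :=
        ENNReal.mul_ne_top (ENNReal.natCast_ne_top _) ENNReal.ofReal_ne_top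
      have h' := ENNReal.toReal_mono hne hPb
      rw [ENNReal.toReal_mul, ENNReal.toReal_ofReal (pow_nonneg hq0 n)] at h'
      simpa using h'
    have hx : r / (2 * Real.sqrt d) ≤ 1 / (m : ℝ) := by
      rw [div_le_div_iff₀ (by positivity) hm0']
      have h' := (le_div_iff₀ hr0).mp hmle
      nlinarith
    have hxd : r ^ d / c ≤ (1 / (m : ℝ)) ^ d := by
      have h' := pow_le_pow_left₀ (by positivity) hx d
      rwa [div_pow, ← hcdef] at h'
    have hnx : L ^ (1 + δ) / c ≤ (n : ℝ) * (1 / (m : ℝ)) ^ d := by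
      calc L ^ (1 + δ) / c = (n : ℝ) * ((n : ℝ)⁻¹ * L ^ (1 + δ) / c) := by
            field_simp
        _ = (n : ℝ) * (r ^ d / c) := by rw [hrd]
        _ ≤ (n : ℝ) * (1 / (m : ℝ)) ^ d := mul_le_mul_of_nonneg_left hxd hn0.le
    have hexp : (1 - (1 / (m : ℝ)) ^ d) ^ n ≤ Real.exp (-(2 * (η + 2)) * L) := by
      calc (1 - (1 / (m : ℝ)) ^ d) ^ n ≤ (Real.exp (-(1 / (m : ℝ)) ^ d)) ^ n := by
            apply pow_le_pow_left₀ hq0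
            linarith [Real.add_one_le_exp (-(1 / (m : ℝ)) ^ d)]
        _ = Real.exp ((n : ℝ) * -(1 / (m : ℝ)) ^ d) := by
            rw [← Real.exp_nat_mul]
        _ ≤ Real.exp (-(2 * (η + 2)) * L) := by
            apply Real.exp_le_exp.mpr
            have h5 : 2 * (η + 2) * L ≤ L ^ (1 + δ) / c := by
              rw [le_div_iff₀ hc0]
              have hsplit : L ^ (1 + δ) = L * L ^ δ := by
                rw [Real.rpow_add hL0, Real.rpow_one]
              rw [hsplit]
              calc 2 * (η + 2) * L * c = L * (2 * c * (η + 2)) := by ring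
                _ ≤ L * L ^ δ := mul_le_mul_of_nonneg_left hLδ hL0.le
            have h6 := h5.trans hnx
            linarith
    have hexp2 : Real.exp (-(2 * (η + 2)) * L) = (n : ℝ) ^ (-(2 * (η + 2)) : ℝ) := by
      rw [hLdef, Real.rpow_def_of_pos hn0, mul_comm]
    have hLX1 : (1 : ℝ) ≤ L ^ (1 + δ) := by
      simpa using Real.rpow_le_rpow_of_exponent_le hL1 (by linarith : (0 : ℝ) ≤ 1 + δ)
    have hmd : (m : ℝ) ^ d ≤ c * n := by
      calc (m : ℝ) ^ d ≤ (2 * Real.sqrt d / r) ^ d :=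
            pow_le_pow_left₀ (by positivity) hmle d
        _ = c / r ^ d := by rw [div_pow, ← hcdef]
        _ = c * (n : ℝ) / L ^ (1 + δ) := by
            rw [hrd]
            rw [div_eq_div_iff (by positivity) (by positivity)]
            field_simp
        _ ≤ c * n := div_le_self (by positivity) hLX1
    calc (n : ℝ) ^ η * ((P n) {ω | ¬ ∀ j, circR (X n ω) (X n ω j) ≤ r}).toReal
        ≤ (n : ℝ) ^ η * ((m : ℝ) ^ d * (1 - (1 / (m : ℝ)) ^ d) ^ n) :=
          mul_le_mul_of_nonneg_left htoReal (Real.rpow_nonneg hn0.le η)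
      _ ≤ (n : ℝ) ^ η * ((c * n) * ((n : ℝ) ^ (-(2 * (η + 2)) : ℝ))) := by
          apply mul_le_mul_of_nonneg_left _ (Real.rpow_nonneg hn0.le η)
          exact mul_le_mul hmd (hexp.trans_eq hexp2) (pow_nonneg hq0 n) (by positivity)
      _ = c * ((n : ℝ) ^ η * (n : ℝ) ^ (1 : ℝ) * (n : ℝ) ^ (-(2 * (η + 2)) : ℝ)) := by
          rw [Real.rpow_one]; ring
      _ = c * (n : ℝ) ^ (η + 1 + -(2 * (η + 2))) := by
          rw [← Real.rpow_add hn0, ← Real.rpow_add hn0]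
      _ ≤ c * (n : ℝ) ^ (-1 : ℝ) := by
          apply mul_le_mul_of_nonneg_left _ hc0.le
          apply Real.rpow_le_rpow_of_exponent_le hn1
          linarith
      _ = c * (n : ℝ)⁻¹ := by rw [Real.rpow_neg_one]
  have h0 : ∀ᶠ n : ℕ in Filter.atTop,
      (0 : ℝ) ≤ (n : ℝ) ^ η * ((P n) {ω | ¬ ∀ j, circR (X n ω) (X n ω j) ≤
          (n : ℝ) ^ (-(1 : ℝ) / d) * Real.log n ^ (1 / (d : ℝ) + ε')}).toReal :=
    Filter.Eventually.of_forall fun n =>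
      mul_nonneg (Real.rpow_nonneg (Nat.cast_nonneg n) η) ENNReal.toReal_nonneg
  have hlim : Filter.Tendsto (fun n : ℕ => c * (n : ℝ)⁻¹) Filter.atTop (nhds 0) := by
    have h' := (tendsto_inv_atTop_zero.comp
      (tendsto_natCast_atTop_atTop (R := ℝ))).const_mul c
    simpa using h'
  exact tendsto_of_tendsto_of_tendsto_of_le_of_le' tendsto_const_nhds hlim h0 key
end
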